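/- arXiv:2106.13463 — 4 statements merged into one kernel-verified Lean document; each statement's English description precedes it below -/
import Mathlib

section
/- Let E be a finite set and P a row-stochastic matrix indexed by E that is irreducible (for all i, j ∈ E there exists n ≥ 1 with (Pⁿ)_{ij} > 0) and aperiodic (for every i ∈ E, the greatest common divisor of {n ≥ 1 : (Pⁿ)_{ii} > 0} equals 1). Let π be a probability vector on E that is invariant for P, i.e. Σ_i π_i P_{ij} = π_j for all j. Then for every probability vector μ on E and every j ∈ E, lim_{n→∞} (μᵀ Pⁿ)_j = π_j; equivalently, any Markov chain on E with transition matrix P converges in distribution to π for any initial distribution. -/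
open Filter

open Finset in
/-- An additively closed set of positive naturals whose only common divisor is `1`
contains all sufficiently large naturals. -/
lemma addClosed_cofinite (S : Set ℕ)
    (hadd : ∀ a ∈ S, ∀ b ∈ S, a + b ∈ S)
    (hpos : ∀ n ∈ S, 1 ≤ n)
    (hgcd : ∀ d : ℕ, (∀ n ∈ S, d ∣ n) → d = 1) :
    ∃ N, ∀ n, N ≤ n → n ∈ S := by
  -- multiples
  have hmul : ∀ k, 1 ≤ k → ∀ b ∈ S, k * b ∈ S := by
    intro k hk
    induction k with
    | zero => omega
    | succ k ih =>
      intro b hb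
      rcases Nat.eq_zero_or_pos k with hk0 | hk0
      · simpa [hk0] using hb
      · have h1 := ih hk0 b hb
        have h2 : k * b + b ∈ S := hadd _ h1 _ hb
        simpa [Nat.succ_mul] using h2
  -- find b ∈ S with b+1 ∈ S
  obtain ⟨b, hb1, hbS, hb1S⟩ : ∃ b, 1 ≤ b ∧ b ∈ S ∧ b + 1 ∈ S := by
    set T : Set ℤ := ((↑) : ℕ → ℤ) '' S with hT
    -- the submonoid closure of T is T ∪ {0}
    have hM : ∀ z : ℤ, z ∈ AddSubmonoid.closure T → z = 0 ∨ z ∈ T := by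
      intro z hz
      induction hz using AddSubmonoid.closure_induction with
      | mem x hx => exact Or.inr hx
      | zero => exact Or.inl rfl
      | add x y hx hy ihx ihy =>
        rcases ihx with rfl | ⟨a, haS, rfl⟩
        · simpa using ihy
        · rcases ihy with rfl | ⟨c, hcS, rfl⟩
          · exact Or.inr ⟨a, haS, by simp⟩
          · exact Or.inr ⟨a + c, hadd a haS c hcS, by push_cast; ring⟩
    -- elements of the subgroup closure are differences of submonoid elements
    have hG : ∀ z : ℤ, z ∈ AddSubgroup.closure T →
        ∃ x ∈ AddSubmonoid.closure T, ∃ y ∈ AddSubmonoid.closure T, z = x - y := by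
      intro z hz
      induction hz using AddSubgroup.closure_induction with
      | mem x hx => exact ⟨x, AddSubmonoid.subset_closure hx, 0, zero_mem _, by ring⟩
      | zero => exact ⟨0, zero_mem _, 0, zero_mem _, by ring⟩
      | add x y hx hy ihx ihy =>
        obtain ⟨a, ha, c, hc, rfl⟩ := ihx
        obtain ⟨a', ha', c', hc', rfl⟩ := ihy
        exact ⟨a + a', add_mem ha ha', c + c', add_mem hc hc', by ring⟩
      | neg x hx ihx =>
        obtain ⟨a, ha, c, hc, rfl⟩ := ihx
        exact ⟨c, hc, a, ha, by ring⟩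
    -- the subgroup closure is cyclic, generated by ±1
    obtain ⟨g, hg⟩ := Int.subgroup_cyclic (AddSubgroup.closure T)
    have hgd : ∀ n ∈ S, g.natAbs ∣ n := by
      intro n hn
      have hnT : (n : ℤ) ∈ AddSubgroup.closure T := AddSubgroup.subset_closure ⟨n, hn, rfl⟩
      rw [hg, AddSubgroup.mem_closure_singleton] at hnT
      obtain ⟨k, hk⟩ := hnT
      have : g ∣ (n : ℤ) := Dvd.intro_left k (by simpa [zsmul_eq_mul] using hk)
      simpa using Int.natAbs_dvd_natAbs.mpr this
    have hg1 : g.natAbs = 1 := hgcd _ hgd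
    have h1mem : (1 : ℤ) ∈ AddSubgroup.closure T := by
      have hgmem : g ∈ AddSubgroup.closure T := by
        rw [hg]; exact AddSubgroup.subset_closure rfl
      rcases Int.natAbs_eq_iff.mp hg1 with h | h
      · rw [h] at hgmem; simpa using hgmem
      · have h2 := neg_mem hgmem; rw [h] at h2; simpa using h2
    obtain ⟨x, hx, y, hy, hxy⟩ := hG 1 h1mem
    rcases hM x hx with rfl | ⟨a, haS, rfl⟩
    · rcases hM y hy with rfl | ⟨c, hcS, rfl⟩ <;> [omega; skip]
      exfalso; have := hpos c hcS; omega
    · rcases hM y hy with rfl | ⟨c, hcS, rfl⟩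
      · -- 1 = a, so 1 ∈ S; take b = 1
        have ha1 : a = 1 := by omega
        subst ha1
        exact ⟨1, le_refl 1, haS, hadd 1 haS 1 haS⟩
      · -- 1 = a - c, so a = c + 1
        have hac : a = c + 1 := by omega
        exact ⟨c, hpos c hcS, hcS, hac ▸ haS⟩
  -- now every n ≥ b*b is in S
  refine ⟨b * b, fun n hn => ?_⟩
  have hb0 : 0 < b := hb1
  set q := n / b with hq
  set r := n % b with hr
  have hqr : q * b + r = n := by rw [mul_comm]; exact Nat.div_add_mod n b
  have hrb : r < b := Nat.mod_lt n hb0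
  have hqb : b ≤ q := by
    rw [hq]
    exact (Nat.le_div_iff_mul_le hb0).mpr (by nlinarith)
  rcases Nat.eq_zero_or_pos r with hr0 | hr0
  · have : n = q * b := by omega
    rw [this]; exact hmul q (by omega) b hbS
  · have hkey : n = (q - r) * b + r * (b + 1) := by
      have : r ≤ q := by omega
      zify [this]; ring_nf; omega
    rw [hkey]
    exact hadd _ (hmul (q - r) (by omega) b hbS) _ (hmul r hr0 _ hb1S)

open Finset

/-- Oscillation contraction for a row-stochastic matrix with entries bounded below by `ε`. -/
lemma osc_contract {E : Type*} [Fintype E] [Nonempty E] (Q : Matrix E E ℝ) (ε : ℝ)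
    (hε : ∀ i k, ε ≤ Q i k) (hrows : ∀ i, ∑ k, Q i k = 1) (g : E → ℝ) :
    Finset.univ.sup' Finset.univ_nonempty (fun i => ∑ k, Q i k * g k)
      - Finset.univ.inf' Finset.univ_nonempty (fun i => ∑ k, Q i k * g k)
    ≤ (1 - (Fintype.card E : ℝ) * ε) *
      (Finset.univ.sup' Finset.univ_nonempty g - Finset.univ.inf' Finset.univ_nonempty g) := by
  obtain ⟨i0, -, hi0⟩ :=
    Finset.exists_mem_eq_sup' Finset.univ_nonempty (fun i => ∑ k, Q i k * g k)
  obtain ⟨i1, -, hi1⟩ :=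
    Finset.exists_mem_eq_inf' Finset.univ_nonempty (fun i => ∑ k, Q i k * g k)
  set M := Finset.univ.sup' Finset.univ_nonempty g with hMdef
  set m := Finset.univ.inf' Finset.univ_nonempty g with hmdef
  have hgM : ∀ k, g k ≤ M := fun k => Finset.le_sup' g (Finset.mem_univ k)
  have hgm : ∀ k, m ≤ g k := fun k => Finset.inf'_le g (Finset.mem_univ k)
  have e : ∀ i, ∑ k, Q i k * (g k - m) = (∑ k, Q i k * g k) - m := by
    intro i
    simp only [mul_sub]
    rw [Finset.sum_sub_distrib, ← Finset.sum_mul, hrows, one_mul]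
  rw [hi0, hi1]
  calc (∑ k, Q i0 k * g k) - (∑ k, Q i1 k * g k)
      = (∑ k, Q i0 k * (g k - m)) - (∑ k, Q i1 k * (g k - m)) := by rw [e, e]; ring
    _ ≤ (∑ k, Q i0 k * (g k - m)) - (∑ k, ε * (g k - m)) := by
        apply sub_le_sub_left
        exact Finset.sum_le_sum fun k _ =>
          mul_le_mul_of_nonneg_right (hε i1 k) (by linarith [hgm k])
    _ = ∑ k, (Q i0 k - ε) * (g k - m) := by
        rw [← Finset.sum_sub_distrib]
        exact Finset.sum_congr rfl fun k _ => by ring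
    _ ≤ ∑ k, (Q i0 k - ε) * (M - m) := by
        exact Finset.sum_le_sum fun k _ =>
          mul_le_mul_of_nonneg_left (by linarith [hgM k]) (by linarith [hε i0 k])
    _ = (1 - (Fintype.card E : ℝ) * ε) * (M - m) := by
        rw [← Finset.sum_mul]
        congr 1
        rw [Finset.sum_sub_distrib, hrows]
        simp [Finset.sum_const, nsmul_eq_mul]

/-- A convex combination lies between the min and the max. -/
lemma convex_mem {E : Type*} [Fintype E] [Nonempty E] (w g : E → ℝ)
    (hw : ∀ i, 0 ≤ w i) (hw1 : ∑ i, w i = 1) :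
    Finset.univ.inf' Finset.univ_nonempty g ≤ ∑ i, w i * g i ∧
      ∑ i, w i * g i ≤ Finset.univ.sup' Finset.univ_nonempty g := by
  constructor
  · have h1 : ∑ i, w i * (Finset.univ.inf' Finset.univ_nonempty g)
        = Finset.univ.inf' Finset.univ_nonempty g := by
      rw [← Finset.sum_mul, hw1, one_mul]
    rw [← h1]
    exact Finset.sum_le_sum fun i _ =>
      mul_le_mul_of_nonneg_left (Finset.inf'_le g (Finset.mem_univ i)) (hw i)
  · have h1 : ∑ i, w i * (Finset.univ.sup' Finset.univ_nonempty g)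
        = Finset.univ.sup' Finset.univ_nonempty g := by
      rw [← Finset.sum_mul, hw1, one_mul]
    rw [← h1]
    exact Finset.sum_le_sum fun i _ =>
      mul_le_mul_of_nonneg_left (Finset.le_sup' g (Finset.mem_univ i)) (hw i)

/-- An irreducible aperiodic row-stochastic matrix `P` on a finite set `E`
with invariant probability vector `π` satisfies: for every probability vector `μ` on `E` and
every `j`, `(μᵀ Pⁿ)_j → π_j` as `n → ∞`; i.e. any Markov chain with transition matrix `P`
converges in distribution to `π` for any initial distribution. -/
theorem irreducible_aperiodic_convergence
    {E : Type*} [Fintype E] [DecidableEq E]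
    (P : Matrix E E ℝ) (π : E → ℝ)
    (hP_nonneg : ∀ i j, 0 ≤ P i j)
    (hP_rows : ∀ i, ∑ j, P i j = 1)
    (hirr : ∀ i j, ∃ n, 1 ≤ n ∧ 0 < (P ^ n) i j)
    (haper : ∀ i, ∀ d : ℕ, (∀ n, 1 ≤ n → 0 < (P ^ n) i i → d ∣ n) → d = 1)
    (hπ_nonneg : ∀ i, 0 ≤ π i)
    (hπ_sum : ∑ i, π i = 1)
    (hπ_inv : ∀ j, ∑ i, π i * P i j = π j) :
    ∀ μ : E → ℝ, (∀ i, 0 ≤ μ i) → ∑ i, μ i = 1 →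
      ∀ j, Tendsto (fun n : ℕ => ∑ i, μ i * (P ^ n) i j) atTop (nhds (π j)) := by
  -- E is nonempty
  haveI hE : Nonempty E := by
    by_contra h
    rw [not_nonempty_iff] at h
    simp [Finset.univ_eq_empty] at hπ_sum
  intro μ hμ0 hμ1 j
  -- basic facts about powers
  have hpow_nonneg : ∀ n i k, 0 ≤ (P ^ n) i k := by
    intro n
    induction n with
    | zero =>
      intro i k
      rw [pow_zero, Matrix.one_apply]
      split <;> norm_num
    | succ n ih =>
      intro i k
      rw [pow_succ, Matrix.mul_apply]
      exact Finset.sum_nonneg fun l _ => mul_nonneg (ih i l) (hP_nonneg l k)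
  have hpow_rows : ∀ n i, ∑ k, (P ^ n) i k = 1 := by
    intro n
    induction n with
    | zero => intro i; simp [Matrix.one_apply]
    | succ n ih =>
      intro i
      simp_rw [pow_succ, Matrix.mul_apply]
      rw [Finset.sum_comm]
      simp_rw [← Finset.mul_sum, hP_rows, mul_one]
      exact ih i
  have hpow_add : ∀ a b i k, (P ^ (a + b)) i k = ∑ l, (P ^ a) i l * (P ^ b) l k := by
    intro a b i k
    rw [pow_add, Matrix.mul_apply]
  have hentry : ∀ a b i l k, 0 < (P ^ a) i l → 0 < (P ^ b) l k → 0 < (P ^ (a + b)) i k := by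
    intro a b i l k ha hb
    have h1 : (P ^ a) i l * (P ^ b) l k ≤ ∑ l', (P ^ a) i l' * (P ^ b) l' k :=
      Finset.single_le_sum (f := fun l' => (P ^ a) i l' * (P ^ b) l' k)
        (fun l' _ => mul_nonneg (hpow_nonneg a i l') (hpow_nonneg b l' k)) (Finset.mem_univ l)
    rw [hpow_add]
    exact lt_of_lt_of_le (mul_pos ha hb) h1
  -- primitivity: some power of P has all entries positive
  obtain ⟨N, hN1, hNpos⟩ : ∃ N, 1 ≤ N ∧ ∀ i k, 0 < (P ^ N) i k := by
    have hdiag : ∀ i : E, ∃ Ni, ∀ n, Ni ≤ n → 0 < (P ^ n) i i := by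
      intro i
      obtain ⟨N0, hN0⟩ := addClosed_cofinite {n | 1 ≤ n ∧ 0 < (P ^ n) i i}
        (fun a ha b hb => ⟨by have := ha.1; omega, hentry a b i i i ha.2 hb.2⟩)
        (fun n hn => hn.1)
        (fun d hd => haper i d (fun n h1 h2 => hd n ⟨h1, h2⟩))
      exact ⟨N0, fun n hn => (hN0 n hn).2⟩
    choose Ni hNi using hdiag
    choose m hm1 hm2 using hirr
    have i0 : E := Classical.arbitrary E
    refine ⟨Finset.univ.sup (fun p : E × E => Ni p.1 + m p.1 p.2), ?_, ?_⟩
    · have h : Ni i0 + m i0 i0 ≤ Finset.univ.sup (fun p : E × E => Ni p.1 + m p.1 p.2) :=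
        Finset.le_sup (f := fun p : E × E => Ni p.1 + m p.1 p.2) (Finset.mem_univ (i0, i0))
      have h2 : 1 ≤ Ni i0 + m i0 i0 := by have := hm1 i0 i0; omega
      exact le_trans h2 h
    · intro i k
      set N := Finset.univ.sup (fun p : E × E => Ni p.1 + m p.1 p.2) with hNdef
      have hle : Ni i + m i k ≤ N :=
        Finset.le_sup (f := fun p : E × E => Ni p.1 + m p.1 p.2) (Finset.mem_univ (i, k))
      have hmk := hm1 i k
      have h1 : 0 < (P ^ (N - m i k)) i i := hNi i _ (by omega)
      have h2 := hm2 i k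
      have h3 := hentry (N - m i k) (m i k) i i k h1 h2
      rwa [Nat.sub_add_cancel (by omega)] at h3
  -- set up the oscillation machinery
  set f : ℕ → E → ℝ := fun n i => (P ^ n) i j with hfdef
  set Mx : ℕ → ℝ := fun n => Finset.univ.sup' Finset.univ_nonempty (f n) with hMxdef
  set mn : ℕ → ℝ := fun n => Finset.univ.inf' Finset.univ_nonempty (f n) with hmndef
  have hfrec : ∀ a n, (fun i => ∑ k, (P ^ a) i k * f n k) = f (a + n) := by
    intro a n
    funext i
    exact (hpow_add a n i j).symm
  -- monotone: oscillation does not increase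
  have hmono : ∀ a n, Mx (a + n) - mn (a + n) ≤ Mx n - mn n := by
    intro a n
    have h := osc_contract (P ^ a) 0 (fun i k => hpow_nonneg a i k) (hpow_rows a) (f n)
    rw [hfrec a n] at h
    rw [show (1 - (Fintype.card E : ℝ) * 0) = 1 by ring, one_mul] at h
    exact h
  -- contraction constant
  set ε : ℝ := (Finset.univ : Finset (E × E)).inf' Finset.univ_nonempty
    (fun p => (P ^ N) p.1 p.2) with hεdef
  have hε_pos : 0 < ε := by
    obtain ⟨p, -, hp⟩ := Finset.exists_mem_eq_inf' (Finset.univ_nonempty)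
      (fun p : E × E => (P ^ N) p.1 p.2)
    rw [hεdef, hp]
    exact hNpos p.1 p.2
  have hε_le : ∀ i k, ε ≤ (P ^ N) i k := fun i k =>
    Finset.inf'_le _ (Finset.mem_univ (i, k))
  set c : ℝ := 1 - (Fintype.card E : ℝ) * ε with hcdef
  have i0 : E := Classical.arbitrary E
  have hcard_eps : (Fintype.card E : ℝ) * ε ≤ 1 := by
    have h1 : ∑ _k : E, ε ≤ ∑ k, (P ^ N) i0 k := Finset.sum_le_sum fun k _ => hε_le i0 k
    rw [hpow_rows N i0] at h1
    simpa [Finset.sum_const, nsmul_eq_mul] using h1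
  have hc0 : 0 ≤ c := by rw [hcdef]; linarith
  have hc1 : c < 1 := by
    rw [hcdef]
    have : (0 : ℝ) < (Fintype.card E : ℝ) * ε :=
      mul_pos (by exact_mod_cast Fintype.card_pos) hε_pos
    linarith
  -- contraction step
  have hcontr : ∀ n, Mx (N + n) - mn (N + n) ≤ c * (Mx n - mn n) := by
    intro n
    have h := osc_contract (P ^ N) ε hε_le (hpow_rows N) (f n)
    rw [hfrec N n] at h
    exact h
  have hosc_nonneg : ∀ n, 0 ≤ Mx n - mn n := by
    intro n
    have h1 : mn n ≤ f n i0 := Finset.inf'_le _ (Finset.mem_univ i0)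
    have h2 : f n i0 ≤ Mx n := Finset.le_sup' _ (Finset.mem_univ i0)
    linarith
  have hosc0 : Mx 0 - mn 0 ≤ 1 := by
    have h1 : Mx 0 ≤ 1 := by
      apply Finset.sup'_le
      intro i _
      show (P ^ 0) i j ≤ 1
      rw [pow_zero, Matrix.one_apply]
      split <;> norm_num
    have h2 : 0 ≤ mn 0 := by
      apply Finset.le_inf'
      intro i _
      exact hpow_nonneg 0 i j
    linarith
  have hgeo : ∀ k, Mx (k * N) - mn (k * N) ≤ c ^ k := by
    intro k
    induction k with
    | zero => simpa using hosc0
    | succ k ih =>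
      have h1 : (k + 1) * N = N + k * N := by ring
      rw [h1, pow_succ]
      calc Mx (N + k * N) - mn (N + k * N) ≤ c * (Mx (k * N) - mn (k * N)) := hcontr _
        _ ≤ c * c ^ k := mul_le_mul_of_nonneg_left ih hc0
        _ = c ^ k * c := by ring
  have hbound : ∀ n, Mx n - mn n ≤ c ^ (n / N) := by
    intro n
    have h1 : n % N + n / N * N = n := Nat.mod_add_div' n N
    calc Mx n - mn n = Mx (n % N + n / N * N) - mn (n % N + n / N * N) := by rw [h1]
      _ ≤ Mx (n / N * N) - mn (n / N * N) := hmono _ _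
      _ ≤ c ^ (n / N) := hgeo _
  -- π is invariant for all powers
  have hπn : ∀ n, ∑ i, π i * f n i = π j := by
    intro n
    induction n with
    | zero =>
      show ∑ i, π i * (P ^ 0) i j = π j
      simp [Matrix.one_apply]
    | succ n ih =>
      show ∑ i, π i * (P ^ (n + 1)) i j = π j
      have hstep : ∀ i, (P ^ (n + 1)) i j = ∑ k, P i k * (P ^ n) k j := by
        intro i
        rw [pow_succ', Matrix.mul_apply]
      simp_rw [hstep, Finset.mul_sum]
      rw [Finset.sum_comm]
      simp_rw [← mul_assoc, ← Finset.sum_mul, hπ_inv]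
      exact ih
  -- both μPⁿ and π lie between mn and Mx
  have hμmem : ∀ n, mn n ≤ ∑ i, μ i * f n i ∧ ∑ i, μ i * f n i ≤ Mx n :=
    fun n => convex_mem μ (f n) hμ0 hμ1
  have hπmem : ∀ n, mn n ≤ π j ∧ π j ≤ Mx n := by
    intro n
    have h := convex_mem π (f n) hπ_nonneg hπ_sum
    rwa [hπn n] at h
  -- the geometric bound tends to zero
  have hdiv : Tendsto (fun n : ℕ => n / N) atTop atTop := by
    apply tendsto_atTop_atTop.mpr
    intro b
    exact ⟨b * N, fun n hn => (Nat.le_div_iff_mul_le (by omega)).mpr hn⟩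
  have hlim : Tendsto (fun n : ℕ => c ^ (n / N)) atTop (nhds 0) :=
    (tendsto_pow_atTop_nhds_zero_of_lt_one hc0 hc1).comp hdiv
  -- squeeze
  have hlow : Tendsto (fun n : ℕ => π j - c ^ (n / N)) atTop (nhds (π j)) := by
    simpa using tendsto_const_nhds.sub hlim
  have hhigh : Tendsto (fun n : ℕ => π j + c ^ (n / N)) atTop (nhds (π j)) := by
    simpa using tendsto_const_nhds.add hlim
  apply tendsto_of_tendsto_of_tendsto_of_le_of_le hlow hhigh
  · intro n
    have h1 := (hμmem n).1
    have h2 := (hπmem n).2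
    have h3 := hbound n
    simp only
    linarith
  · intro n
    have h1 := (hμmem n).2
    have h2 := (hπmem n).1
    have h3 := hbound n
    simp only
    linarith
end

section
/- Let Δ be a real d×d matrix, let T > 0 and C ≥ 0, and let (Q_k)_{k≥1} be a sequence of real d×d matrices such that ‖Q_k − (Id − (T/k)·Δ)‖ ≤ C/k² for all k ≥ 1, where ‖·‖ is a submultiplicative matrix norm and Id is the identity matrix. Then the matrix powers Q_k^k converge to the matrix exponential exp(−T·Δ) as k → ∞. -/
open Filter

open scoped Nat
section Aux

variable {𝔸 : Type*} [NormedRing 𝔸]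

lemma aux_pow_sub_pow (a b : 𝔸) (M : ℝ) (ha : ‖a‖ ≤ M) (hb : ‖b‖ ≤ M) :
    ∀ n : ℕ, ‖a ^ n - b ^ n‖ ≤ n * M ^ (n - 1) * ‖a - b‖ := by
  intro n
  induction n with
  | zero => simp
  | succ n ih =>
    have hM0 : 0 ≤ M := le_trans (norm_nonneg a) ha
    have key : a ^ (n + 1) - b ^ (n + 1) = a * (a ^ n - b ^ n) + (a - b) * b ^ n := by
      rw [mul_sub, sub_mul, ← pow_succ', ← pow_succ']
      abel
    have h1 : ‖a * (a ^ n - b ^ n)‖ ≤ M * (n * M ^ (n - 1) * ‖a - b‖) :=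
      (norm_mul_le _ _).trans (mul_le_mul ha ih (norm_nonneg _) hM0)
    have h2 : ‖(a - b) * b ^ n‖ ≤ ‖a - b‖ * M ^ n := by
      rcases Nat.eq_zero_or_pos n with h | h
      · subst h; simp
      · exact (norm_mul_le _ _).trans (mul_le_mul_of_nonneg_left
          ((norm_pow_le' b h).trans (pow_le_pow_left₀ (norm_nonneg b) hb n)) (norm_nonneg _))
    have h3 : M * ((n : ℝ) * M ^ (n - 1) * ‖a - b‖) ≤ (n : ℝ) * M ^ n * ‖a - b‖ := by
      rcases Nat.eq_zero_or_pos n with h | h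
      · subst h; simp
      · have hMM : M * M ^ (n - 1) = M ^ n := by
          rw [← pow_succ']
          congr 1
          omega
        have he : M * ((n : ℝ) * M ^ (n - 1) * ‖a - b‖) = (n : ℝ) * M ^ n * ‖a - b‖ := by
          rw [← hMM]; ring
        exact he.le
    calc ‖a ^ (n + 1) - b ^ (n + 1)‖ = ‖a * (a ^ n - b ^ n) + (a - b) * b ^ n‖ := by rw [key]
      _ ≤ ‖a * (a ^ n - b ^ n)‖ + ‖(a - b) * b ^ n‖ := norm_add_le _ _
      _ ≤ (n : ℝ) * M ^ n * ‖a - b‖ + ‖a - b‖ * M ^ n := add_le_add (h1.trans h3) h2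
      _ = ((n : ℕ) + 1 : ℝ) * M ^ n * ‖a - b‖ := by ring
      _ = ((n + 1 : ℕ) : ℝ) * M ^ ((n + 1) - 1) * ‖a - b‖ := by push_cast; ring_nf

variable [NormedAlgebra ℝ 𝔸] [CompleteSpace 𝔸]

lemma aux_norm_exp_le (h1 : ‖(1 : 𝔸)‖ ≤ 1) (x : 𝔸) :
    ‖NormedSpace.exp x‖ ≤ Real.exp ‖x‖ := by
  rw [NormedSpace.exp_eq_tsum ℝ]
  have hterm : ∀ n : ℕ, ‖((n ! : ℝ))⁻¹ • x ^ n‖ ≤ ‖x‖ ^ n / n ! := by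
    intro n
    rw [norm_smul, Real.norm_eq_abs, abs_of_nonneg (by positivity)]
    rcases Nat.eq_zero_or_pos n with h | h
    · subst h; simpa using h1
    · rw [div_eq_inv_mul]
      exact mul_le_mul_of_nonneg_left (norm_pow_le' x h) (by positivity)
  calc ‖∑' n : ℕ, ((n ! : ℝ))⁻¹ • x ^ n‖ ≤ ∑' n : ℕ, ‖((n ! : ℝ))⁻¹ • x ^ n‖ :=
        norm_tsum_le_tsum_norm (NormedSpace.norm_expSeries_summable' x)
    _ ≤ ∑' n : ℕ, ‖x‖ ^ n / n ! :=
        Summable.tsum_le_tsum hterm (NormedSpace.norm_expSeries_summable' x)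
          (Real.summable_pow_div_factorial _)
    _ = Real.exp ‖x‖ := by rw [Real.exp_eq_exp_ℝ, NormedSpace.exp_eq_tsum_div]

lemma aux_exp_tail (x : 𝔸) :
    ‖NormedSpace.exp x - 1 - x‖ ≤ ‖x‖ ^ 2 * Real.exp ‖x‖ := by
  have hs : Summable fun n : ℕ => ((n ! : ℝ))⁻¹ • x ^ n := NormedSpace.expSeries_summable' x
  have heq : NormedSpace.exp x - 1 - x = ∑' n : ℕ, (((n + 2)! : ℝ))⁻¹ • x ^ (n + 2) := by
    have h2 := Summable.sum_add_tsum_nat_add 2 hs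
    rw [NormedSpace.exp_eq_tsum ℝ]
    beta_reduce
    rw [← h2]
    simp [Finset.sum_range_succ]
    abel
  have hsn : Summable fun n : ℕ => ‖((n ! : ℝ))⁻¹ • x ^ n‖ := NormedSpace.norm_expSeries_summable' x
  have hsn2 : Summable fun n : ℕ => ‖(((n + 2)! : ℝ))⁻¹ • x ^ (n + 2)‖ :=
    (summable_nat_add_iff 2).2 hsn
  have hg : Summable fun n : ℕ => ‖x‖ ^ 2 * (‖x‖ ^ n / n !) :=
    (Real.summable_pow_div_factorial ‖x‖).mul_left _
  have hterm : ∀ n : ℕ, ‖(((n + 2)! : ℝ))⁻¹ • x ^ (n + 2)‖ ≤ ‖x‖ ^ 2 * (‖x‖ ^ n / n !) := by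
    intro n
    have hfac : ((n + 2)! : ℝ)⁻¹ ≤ (n ! : ℝ)⁻¹ := by
      apply inv_anti₀ (by positivity)
      exact_mod_cast Nat.factorial_le (by omega)
    calc ‖(((n + 2)! : ℝ))⁻¹ • x ^ (n + 2)‖ = ((n + 2)! : ℝ)⁻¹ * ‖x ^ (n + 2)‖ := by
          rw [norm_smul, Real.norm_eq_abs, abs_of_nonneg (by positivity)]
      _ ≤ (n ! : ℝ)⁻¹ * ‖x‖ ^ (n + 2) :=
          mul_le_mul hfac (norm_pow_le' x (by omega)) (norm_nonneg _) (by positivity)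
      _ = ‖x‖ ^ 2 * (‖x‖ ^ n / n !) := by rw [pow_add]; ring
  calc ‖NormedSpace.exp x - 1 - x‖ = ‖∑' n : ℕ, (((n + 2)! : ℝ))⁻¹ • x ^ (n + 2)‖ := by rw [heq]
    _ ≤ ∑' n : ℕ, ‖(((n + 2)! : ℝ))⁻¹ • x ^ (n + 2)‖ := norm_tsum_le_tsum_norm hsn2
    _ ≤ ∑' n : ℕ, ‖x‖ ^ 2 * (‖x‖ ^ n / n !) := Summable.tsum_le_tsum hterm hsn2 hg
    _ = ‖x‖ ^ 2 * ∑' n : ℕ, (‖x‖ ^ n / n !) := tsum_mul_left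
    _ = ‖x‖ ^ 2 * Real.exp ‖x‖ := by rw [Real.exp_eq_exp_ℝ, NormedSpace.exp_eq_tsum_div]

end Aux

set_option maxHeartbeats 1000000 in
/-- Let `Δ` be a real `d × d` matrix, `T > 0`, `C ≥ 0`, and `(Q_k)_{k ≥ 1}` a
sequence of real `d × d` matrices with `‖Q_k - (Id - (T/k)·Δ)‖ ≤ C/k²` for a submultiplicative
matrix norm `‖·‖`.  Then `Q_k ^ k → exp (-T·Δ)` as `k → ∞`. -/
theorem powers_tendsto_matrix_exp
    (d : ℕ)
    (Δ : Matrix (Fin d) (Fin d) ℝ)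
    (T : ℝ) (hT : 0 < T) (C : ℝ) (hC : 0 ≤ C)
    (nrm : Matrix (Fin d) (Fin d) ℝ → ℝ)
    (hnrm_nonneg : ∀ A, 0 ≤ nrm A)
    (hnrm_eq_zero : ∀ A, nrm A = 0 ↔ A = 0)
    (hnrm_add : ∀ A B, nrm (A + B) ≤ nrm A + nrm B)
    (hnrm_smul : ∀ (c : ℝ) A, nrm (c • A) = |c| * nrm A)
    (hnrm_mul : ∀ A B, nrm (A * B) ≤ nrm A * nrm B)
    (Q : ℕ → Matrix (Fin d) (Fin d) ℝ)
    (hQ : ∀ k : ℕ, 1 ≤ k → nrm (Q k - (1 - (T / (k : ℝ)) • Δ)) ≤ C / (k : ℝ) ^ 2) :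
    Tendsto (fun k : ℕ => Q k ^ k) atTop (nhds (NormedSpace.exp (-(T • Δ)))) := by
  rcases Nat.eq_zero_or_pos d with hd | hd
  · haveI : IsEmpty (Fin d) := by subst hd; infer_instance
    haveI : Subsingleton (Matrix (Fin d) (Fin d) ℝ) := by
      constructor; intro A B; funext i; exact absurd i.2 (by omega)
    have he : (fun k : ℕ => Q k ^ k) = fun _ => NormedSpace.exp (-(T • Δ)) :=
      funext fun k => Subsingleton.elim _ _
    rw [he]; exact tendsto_const_nhds
  haveI : Nonempty (Fin d) := Fin.pos_iff_nonempty.mp hd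
  letI : SeminormedRing (Matrix (Fin d) (Fin d) ℝ) := Matrix.linftyOpSemiNormedRing
  letI : NormedRing (Matrix (Fin d) (Fin d) ℝ) := Matrix.linftyOpNormedRing
  letI : NormedAlgebra ℝ (Matrix (Fin d) (Fin d) ℝ) := Matrix.linftyOpNormedAlgebra
  have nrm_zero : nrm 0 = 0 := (hnrm_eq_zero 0).2 rfl
  -- triangle inequality for finite sums
  have nrm_sum_le : ∀ {ι : Type} (s : Finset ι) (f : ι → Matrix (Fin d) (Fin d) ℝ),
      nrm (∑ i ∈ s, f i) ≤ ∑ i ∈ s, nrm (f i) := by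
    intro ι s f
    induction s using Finset.cons_induction with
    | empty => simp [nrm_zero]
    | cons a s ha ih =>
      rw [Finset.sum_cons, Finset.sum_cons]
      exact le_trans (hnrm_add _ _) (by linarith)
  -- entrywise bound by the operator norm
  have hentry : ∀ (A : Matrix (Fin d) (Fin d) ℝ) (i j : Fin d), |A i j| ≤ ‖A‖ := by
    intro A i j
    have h : ‖A i j‖₊ ≤ ‖A‖₊ := by
      rw [Matrix.linfty_opNNNorm_def]
      exact le_trans (Finset.single_le_sum (f := fun j => ‖A i j‖₊)
        (fun _ _ => zero_le) (Finset.mem_univ j))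
        (Finset.le_sup (f := fun i => ∑ j, ‖A i j‖₊) (Finset.mem_univ i))
    calc |A i j| = ‖A i j‖ := (Real.norm_eq_abs _).symm
      _ ≤ ‖A‖ := h
  -- upper bound : nrm ≤ c2 * ‖·‖
  set c2 : ℝ := ∑ i : Fin d, ∑ j : Fin d, nrm (Matrix.single i j 1) with hc2def
  have hc2nonneg : 0 ≤ c2 :=
    Finset.sum_nonneg fun i _ => Finset.sum_nonneg fun j _ => hnrm_nonneg _
  have hc2 : ∀ A, nrm A ≤ c2 * ‖A‖ := by
    intro A
    have hrepr := Matrix.matrix_eq_sum_single A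
    calc nrm A = nrm (∑ i : Fin d, ∑ j : Fin d, Matrix.single i j (A i j)) := by
          rw [← hrepr]
      _ ≤ ∑ i : Fin d, nrm (∑ j : Fin d, Matrix.single i j (A i j)) := nrm_sum_le _ _
      _ ≤ ∑ i : Fin d, ∑ j : Fin d, nrm (Matrix.single i j (A i j)) :=
          Finset.sum_le_sum fun i _ => nrm_sum_le _ _
      _ ≤ ∑ i : Fin d, ∑ j : Fin d, ‖A‖ * nrm (Matrix.single i j 1) := by
          refine Finset.sum_le_sum fun i _ => Finset.sum_le_sum fun j _ => ?_
          have h1 : Matrix.single i j (A i j) = A i j • Matrix.single i j 1 := by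
            rw [Matrix.smul_single, smul_eq_mul, mul_one]
          rw [h1, hnrm_smul]
          exact mul_le_mul_of_nonneg_right (hentry A i j) (hnrm_nonneg _)
      _ = c2 * ‖A‖ := by
          rw [hc2def, Finset.sum_mul]
          refine Finset.sum_congr rfl fun i _ => ?_
          rw [Finset.sum_mul]
          exact Finset.sum_congr rfl fun j _ => mul_comm _ _
  -- nrm is Lipschitz, hence continuous
  have nrm_neg : ∀ A, nrm (-A) = nrm A := by
    intro A
    have := hnrm_smul (-1) A
    simpa using this
  have hlip : ∀ A B, |nrm A - nrm B| ≤ nrm (A - B) := by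
    intro A B
    have hAB : nrm A ≤ nrm (A - B) + nrm B := by
      have := hnrm_add (A - B) B; simpa using this
    have hBA : nrm B ≤ nrm (A - B) + nrm A := by
      have h := hnrm_add (B - A) A
      rw [show B - A = -(A - B) by abel, nrm_neg] at h
      simpa using h
    rw [abs_sub_le_iff]; constructor <;> linarith
  have hcont : Continuous nrm := by
    have : LipschitzWith (Real.toNNReal c2) nrm := by
      apply LipschitzWith.of_dist_le_mul
      intro A B
      rw [Real.dist_eq, dist_eq_norm]
      refine le_trans (hlip A B) (le_trans (hc2 _) ?_)
      exact mul_le_mul_of_nonneg_right (Real.le_coe_toNNReal c2) (norm_nonneg _)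
    exact this.continuous
  -- minimum of nrm on the unit sphere
  haveI : FiniteDimensional ℝ (Matrix (Fin d) (Fin d) ℝ) := by infer_instance
  haveI : ProperSpace (Matrix (Fin d) (Fin d) ℝ) := FiniteDimensional.proper ℝ _
  haveI : Nontrivial (Matrix (Fin d) (Fin d) ℝ) := by
    refine ⟨0, 1, fun h => ?_⟩
    have := congrFun (congrFun h ⟨0, hd⟩) ⟨0, hd⟩
    simp [Matrix.one_apply] at this
  obtain ⟨a, ha, hamin⟩ := (isCompact_sphere (0 : Matrix (Fin d) (Fin d) ℝ) 1).exists_isMinOn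
    (NormedSpace.sphere_nonempty.mpr zero_le_one) hcont.continuousOn
  have ha1 : ‖a‖ = 1 := mem_sphere_zero_iff_norm.mp ha
  set m : ℝ := nrm a with hm
  have hm0 : 0 < m := by
    rcases lt_or_eq_of_le (hnrm_nonneg a) with h | h
    · exact h
    · exfalso
      have : a = 0 := (hnrm_eq_zero a).1 h.symm
      rw [this, norm_zero] at ha1
      norm_num at ha1
  have hc1 : ∀ A, ‖A‖ ≤ m⁻¹ * nrm A := by
    intro A
    rcases eq_or_ne A 0 with rfl | hA
    · simp [nrm_zero]
    · have hApos : 0 < ‖A‖ := norm_pos_iff.mpr hA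
      have hu : (‖A‖⁻¹ • A) ∈ Metric.sphere (0 : Matrix (Fin d) (Fin d) ℝ) 1 := by
        rw [mem_sphere_zero_iff_norm, norm_smul, norm_inv, norm_norm]
        field_simp
      have hmin := isMinOn_iff.mp hamin _ hu
      rw [hnrm_smul, abs_of_nonneg (inv_nonneg.mpr (norm_nonneg A))] at hmin
      have h2 : m * ‖A‖ ≤ nrm A := by
        have := mul_le_mul_of_nonneg_right hmin hApos.le
        rw [mul_assoc, mul_comm (nrm A), ← mul_assoc, inv_mul_cancel₀ hApos.ne', one_mul] at this
        linarith [this]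
      calc ‖A‖ = m⁻¹ * (m * ‖A‖) := by field_simp
        _ ≤ m⁻¹ * nrm A := mul_le_mul_of_nonneg_left h2 (inv_nonneg.mpr hm0.le)
  -- main estimate
  set x : Matrix (Fin d) (Fin d) ℝ := -(T • Δ) with hx
  obtain ⟨D, hDdef⟩ : ∃ D : ℝ, D = m⁻¹ * C + ‖x‖ ^ 2 * Real.exp ‖x‖ := ⟨_, rfl⟩
  have hD0 : 0 ≤ D := by rw [hDdef]; positivity
  obtain ⟨E, hEdef⟩ : ∃ E : ℝ, E = Real.exp (‖x‖ + D) * D := ⟨_, rfl⟩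
  have h1le : ‖(1 : Matrix (Fin d) (Fin d) ℝ)‖ ≤ 1 := norm_one.le
  have key : ∀ k : ℕ, 1 ≤ k → ‖Q k ^ k - NormedSpace.exp x‖ ≤ E / k := by
    intro k hk
    have hk0 : (0:ℝ) < k := by exact_mod_cast hk
    have hk1 : (1:ℝ) ≤ k := by exact_mod_cast hk
    set y : Matrix (Fin d) (Fin d) ℝ := (k : ℝ)⁻¹ • x with hy
    set P : Matrix (Fin d) (Fin d) ℝ := NormedSpace.exp y with hP
    have hyn : ‖y‖ = ‖x‖ / k := by
      rw [hy, norm_smul, norm_inv, Real.norm_natCast]; ring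
    have hyx : ‖y‖ ≤ ‖x‖ := by
      rw [hyn]; exact div_le_self (norm_nonneg x) hk1
    have hA : (1 : Matrix (Fin d) (Fin d) ℝ) - (T / (k : ℝ)) • Δ = 1 + y := by
      rw [hy, hx, smul_neg, smul_smul, sub_eq_add_neg]
      congr 2
      rw [div_eq_inv_mul]
    have htail : ‖P - 1 - y‖ ≤ ‖x‖ ^ 2 * Real.exp ‖x‖ / k ^ 2 := by
      refine le_trans (aux_exp_tail y) ?_
      have h1 : ‖y‖ ^ 2 = ‖x‖ ^ 2 / (k:ℝ) ^ 2 := by rw [hyn, div_pow]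
      rw [h1, div_mul_eq_mul_div]
      gcongr
    have hQP : ‖Q k - P‖ ≤ D / k ^ 2 := by
      have h1 : ‖Q k - (1 + y)‖ ≤ m⁻¹ * (C / (k:ℝ) ^ 2) := by
        rw [← hA]
        exact le_trans (hc1 _) (mul_le_mul_of_nonneg_left (hQ k hk) (inv_nonneg.mpr hm0.le))
      have h2 : ‖(1 + y) - P‖ ≤ ‖x‖ ^ 2 * Real.exp ‖x‖ / k ^ 2 := by
        rw [show (1 + y) - P = -(P - 1 - y) by abel, norm_neg]
        exact htail
      calc ‖Q k - P‖ = ‖(Q k - (1 + y)) + ((1 + y) - P)‖ := by congr 1; abel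
        _ ≤ ‖Q k - (1 + y)‖ + ‖(1 + y) - P‖ := norm_add_le _ _
        _ ≤ m⁻¹ * (C / (k:ℝ) ^ 2) + ‖x‖ ^ 2 * Real.exp ‖x‖ / k ^ 2 := add_le_add h1 h2
        _ = D / k ^ 2 := by rw [hDdef]; field_simp
    have hPexp : ‖P‖ ≤ Real.exp (‖x‖ / k) := by
      refine le_trans (aux_norm_exp_le h1le y) ?_
      rw [hyn]
    have hPle : ‖P‖ ≤ Real.exp ((‖x‖ + D) / k) := by
      refine le_trans hPexp (Real.exp_le_exp.mpr ?_)
      rw [add_div]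
      have : 0 ≤ D / (k:ℝ) := by positivity
      linarith
    have hQle : ‖Q k‖ ≤ Real.exp ((‖x‖ + D) / k) := by
      have hQn : ‖Q k‖ ≤ ‖P‖ + D / k ^ 2 := by
        calc ‖Q k‖ = ‖P + (Q k - P)‖ := by congr 1; abel
          _ ≤ ‖P‖ + ‖Q k - P‖ := norm_add_le _ _
          _ ≤ ‖P‖ + D / k ^ 2 := by linarith [hQP]
      have hu : 0 ≤ ‖x‖ / (k:ℝ) := by positivity
      have hv : 0 ≤ D / (k:ℝ) ^ 2 := by positivity
      have hexp : Real.exp (‖x‖ / k) + D / k ^ 2 ≤ Real.exp (‖x‖ / k + D / k ^ 2) := by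
        nlinarith [Real.add_one_le_exp (D / (k:ℝ) ^ 2), Real.one_le_exp hu,
          Real.exp_add (‖x‖ / k) (D / (k:ℝ) ^ 2), Real.exp_pos (‖x‖ / (k:ℝ))]
      have harg : ‖x‖ / k + D / (k:ℝ) ^ 2 ≤ (‖x‖ + D) / k := by
        rw [add_div]
        have hksq : (k:ℝ) ≤ (k:ℝ) ^ 2 := by nlinarith
        have : D / (k:ℝ) ^ 2 ≤ D / k := by gcongr
        linarith
      calc ‖Q k‖ ≤ ‖P‖ + D / k ^ 2 := hQn
        _ ≤ Real.exp (‖x‖ / k) + D / k ^ 2 := by linarith [hPexp]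
        _ ≤ Real.exp (‖x‖ / k + D / k ^ 2) := hexp
        _ ≤ Real.exp ((‖x‖ + D) / k) := Real.exp_le_exp.mpr harg
    set Mk : ℝ := Real.exp ((‖x‖ + D) / k) with hMk
    have hMk1 : 1 ≤ Mk := Real.one_le_exp (by positivity)
    have htel : ‖Q k ^ k - P ^ k‖ ≤ k * Mk ^ (k - 1) * ‖Q k - P‖ :=
      aux_pow_sub_pow _ _ _ hQle hPle k
    have hMkpow : Mk ^ (k - 1) ≤ Real.exp (‖x‖ + D) := by
      have h1 : Mk ^ (k - 1) ≤ Mk ^ k := pow_le_pow_right₀ hMk1 (Nat.sub_le k 1)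
      have h2 : Mk ^ k = Real.exp (‖x‖ + D) := by
        rw [hMk, ← Real.exp_nat_mul]
        congr 1
        field_simp
      rw [← h2]; exact h1
    have hPk : P ^ k = NormedSpace.exp x := by
      rw [hP]
      let +nondep : NormedAlgebra ℚ (Matrix (Fin d) (Fin d) ℝ) := .restrictScalars ℚ ℝ _
      refine (NormedSpace.exp_nsmul k y).symm.trans ?_
      congr 1
      rw [hy, ← Nat.cast_smul_eq_nsmul ℝ, smul_smul, mul_inv_cancel₀ hk0.ne', one_smul]
    calc ‖Q k ^ k - NormedSpace.exp x‖ = ‖Q k ^ k - P ^ k‖ := by rw [hPk]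
      _ ≤ k * Mk ^ (k - 1) * ‖Q k - P‖ := htel
      _ ≤ k * Real.exp (‖x‖ + D) * (D / k ^ 2) := by
          gcongr
      _ = E / k := by rw [hEdef]; field_simp
  have final : Tendsto (fun k : ℕ => ‖Q k ^ k - NormedSpace.exp x‖) atTop (nhds 0) := by
    apply squeeze_zero' (Eventually.of_forall fun k => norm_nonneg _)
      (by filter_upwards [eventually_ge_atTop 1] with k hk using key k hk)
      (tendsto_const_div_atTop_nhds_zero_nat E)
  exact tendsto_iff_norm_sub_tendsto_zero.mpr final
end

section
/- In the discrete stochastic SIR model, for every k ∈ ℕ the conditional variance of the number of infectious individuals satisfies, almost surely: Var(I_{k+1} | 𝓕_k) = S_k·(1 − e^{−λ I_k h})·e^{−λ I_k h} + I_k·(1 − e^{−γh})·e^{−γh}, where Var(Z | 𝓕_k) := 𝔼[Z² | 𝓕_k] − (𝔼[Z | 𝓕_k])². -/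
open MeasureTheory ProbabilityTheory Filter Real

namespace SIRaux

def aF (N : ℕ) (c : Fin N → Bool × Bool) (i : ℕ) : ℕ :=
  if h : i < N then (if (c ⟨i, h⟩).1 then 1 else 0) else 0

def bF (N : ℕ) (c : Fin N → Bool × Bool) (i : ℕ) : ℕ :=
  if h : i < N then (if (c ⟨i, h⟩).2 then 1 else 0) else 0

lemma aF_le_one (N : ℕ) (c : Fin N → Bool × Bool) (i : ℕ) : aF N c i ≤ 1 := by
  unfold aF; split
  · split <;> omega
  · omega

lemma bF_le_one (N : ℕ) (c : Fin N → Bool × Bool) (i : ℕ) : bF N c i ≤ 1 := by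
  unfold bF; split
  · split <;> omega
  · omega

lemma sum_prod_eq (N : ℕ) {V : Type*} [Fintype V] [DecidableEq V] (f : Fin N → V → ℝ) :
    ∑ c : Fin N → V, ∏ i, f i (c i) = ∏ i, ∑ v, f i v := by
  rw [Finset.prod_univ_sum, Fintype.piFinset_univ]

lemma insertion (N : ℕ) {V : Type*} [Fintype V] [DecidableEq V] (w : V → ℝ)
    (hw : ∑ v, w v = 1) (t : Finset (Fin N)) (ψ : Fin N → V → ℝ)
    (hψ : ∀ j ∉ t, ψ j = w) :
    ∑ c : Fin N → V, ∏ i, ψ i (c i) = ∏ j ∈ t, ∑ v, ψ j v := by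
  rw [sum_prod_eq]
  exact (Finset.prod_subset t.subset_univ (fun j _ hj => by rw [hψ j hj, hw])).symm

lemma M1 (N : ℕ) {V : Type*} [Fintype V] [DecidableEq V] (w : V → ℝ)
    (hw : ∑ v, w v = 1) (g : V → ℝ) (i : Fin N) :
    ∑ c : Fin N → V, g (c i) * ∏ j, w (c j) = ∑ v, g v * w v := by
  have h1 : ∀ c : Fin N → V, g (c i) * ∏ j, w (c j)
      = ∏ j, ((if j = i then g (c j) else 1) * w (c j)) := by
    intro c
    rw [Finset.prod_mul_distrib, Finset.prod_ite_eq']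
    simp
  simp only [h1]
  refine (insertion N w hw {i} (fun j v => (if j = i then g v else 1) * w v)
    (fun j hj => by funext v; simp [Finset.mem_singleton.not.mp hj])).trans ?_
  simp

lemma M2 (N : ℕ) {V : Type*} [Fintype V] [DecidableEq V] (w : V → ℝ)
    (hw : ∑ v, w v = 1) (g g' : V → ℝ) (i j : Fin N) (hij : i ≠ j) :
    ∑ c : Fin N → V, g (c i) * g' (c j) * ∏ l, w (c l)
      = (∑ v, g v * w v) * (∑ v, g' v * w v) := by
  have h1 : ∀ c : Fin N → V, g (c i) * g' (c j) * ∏ l, w (c l)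
      = ∏ l, ((if l = i then g (c l) else 1) * (if l = j then g' (c l) else 1) * w (c l)) := by
    intro c
    rw [Finset.prod_mul_distrib, Finset.prod_mul_distrib, Finset.prod_ite_eq',
      Finset.prod_ite_eq']
    simp
  simp only [h1]
  refine (insertion N w hw {i, j}
    (fun l v => ((if l = i then g v else 1) * if l = j then g' v else 1) * w v)
    (fun l hl => by
      simp only [Finset.mem_insert, Finset.mem_singleton, not_or] at hl
      funext v; simp [hl.1, hl.2])).trans ?_
  rw [Finset.prod_pair hij]
  congr 1
  · apply Finset.sum_congr rfl; intro v _; simp [hij]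
  · apply Finset.sum_congr rfl; intro v _; simp [Ne.symm hij]

lemma core (N : ℕ) {V : Type*} [Fintype V] [DecidableEq V] (w : V → ℝ)
    (hw : ∑ v, w v = 1) (φ : Fin N → V → ℝ) (z : ℝ) :
    ∑ c : Fin N → V, (z + ∑ i, φ i (c i)) ^ 2 * ∏ j, w (c j)
        - (∑ c : Fin N → V, (z + ∑ i, φ i (c i)) * ∏ j, w (c j)) ^ 2
      = ∑ i, (∑ v, φ i v * φ i v * w v - (∑ v, φ i v * w v) ^ 2) := by
  have hS0 : ∑ c : Fin N → V, ∏ j, w (c j) = 1 :=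
    (sum_prod_eq N fun _ v => w v).trans (by simp [hw])
  set m : Fin N → ℝ := fun i => ∑ v, φ i v * w v with hm
  have hS1 : ∑ c : Fin N → V, (∑ i, φ i (c i)) * ∏ j, w (c j) = ∑ i, m i := by
    calc ∑ c : Fin N → V, (∑ i, φ i (c i)) * ∏ j, w (c j)
        = ∑ c : Fin N → V, ∑ i, φ i (c i) * ∏ j, w (c j) := by
          apply Finset.sum_congr rfl; intros; rw [Finset.sum_mul]
      _ = ∑ i, ∑ c : Fin N → V, φ i (c i) * ∏ j, w (c j) := Finset.sum_comm
      _ = ∑ i, m i := by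
          apply Finset.sum_congr rfl; intro i _; exact M1 N w hw (φ i) i
  have hS2 : ∑ c : Fin N → V, (∑ i, φ i (c i)) ^ 2 * ∏ j, w (c j)
      = ∑ i, ∑ j, (if i = j then ∑ v, φ i v * φ i v * w v else m i * m j) := by
    calc ∑ c : Fin N → V, (∑ i, φ i (c i)) ^ 2 * ∏ j, w (c j)
        = ∑ c : Fin N → V, ∑ i, ∑ j, φ i (c i) * φ j (c j) * ∏ l, w (c l) := by
          apply Finset.sum_congr rfl; intro c _
          rw [sq, Finset.sum_mul_sum]
          simp only [Finset.sum_mul]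
      _ = ∑ i, ∑ j, ∑ c : Fin N → V, φ i (c i) * φ j (c j) * ∏ l, w (c l) := by
          rw [Finset.sum_comm]
          apply Finset.sum_congr rfl; intro i _
          rw [Finset.sum_comm]
      _ = ∑ i, ∑ j, (if i = j then ∑ v, φ i v * φ i v * w v else m i * m j) := by
          apply Finset.sum_congr rfl; intro i _
          apply Finset.sum_congr rfl; intro j _
          by_cases hij : i = j
          · subst hij
            simp only [if_pos rfl]
            exact M1 N w hw (fun v => φ i v * φ i v) i
          · rw [if_neg hij]
            exact M2 N w hw (φ i) (φ j) i j hij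
  have e1 : ∑ c : Fin N → V, (z + ∑ i, φ i (c i)) ^ 2 * ∏ j, w (c j)
      = z ^ 2 + 2 * z * (∑ i, m i)
        + ∑ i, ∑ j, (if i = j then ∑ v, φ i v * φ i v * w v else m i * m j) := by
    calc ∑ c : Fin N → V, (z + ∑ i, φ i (c i)) ^ 2 * ∏ j, w (c j)
        = ∑ c : Fin N → V, (z ^ 2 * ∏ j, w (c j)
            + 2 * z * ((∑ i, φ i (c i)) * ∏ j, w (c j))
            + (∑ i, φ i (c i)) ^ 2 * ∏ j, w (c j)) := by
          apply Finset.sum_congr rfl; intros; ring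
      _ = z ^ 2 * (∑ c : Fin N → V, ∏ j, w (c j))
            + 2 * z * (∑ c : Fin N → V, (∑ i, φ i (c i)) * ∏ j, w (c j))
            + ∑ c : Fin N → V, (∑ i, φ i (c i)) ^ 2 * ∏ j, w (c j) := by
          rw [Finset.sum_add_distrib, Finset.sum_add_distrib, ← Finset.mul_sum, ← Finset.mul_sum]
      _ = _ := by rw [hS0, hS1, hS2]; ring
  have e2 : ∑ c : Fin N → V, (z + ∑ i, φ i (c i)) * ∏ j, w (c j) = z + ∑ i, m i := by
    calc ∑ c : Fin N → V, (z + ∑ i, φ i (c i)) * ∏ j, w (c j)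
        = ∑ c : Fin N → V, (z * ∏ j, w (c j) + (∑ i, φ i (c i)) * ∏ j, w (c j)) := by
          apply Finset.sum_congr rfl; intros; ring
      _ = z * (∑ c : Fin N → V, ∏ j, w (c j))
            + ∑ c : Fin N → V, (∑ i, φ i (c i)) * ∏ j, w (c j) := by
          rw [Finset.sum_add_distrib, ← Finset.mul_sum]
      _ = z + ∑ i, m i := by rw [hS0, hS1]; ring
  rw [e1, e2]
  have hT : ∑ i, ∑ j, (if i = j then ∑ v, φ i v * φ i v * w v else m i * m j)
      - (∑ i, m i) ^ 2 = ∑ i, (∑ v, φ i v * φ i v * w v - m i ^ 2) := by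
    rw [sq, Finset.sum_mul_sum, ← Finset.sum_sub_distrib]
    apply Finset.sum_congr rfl; intro i _
    rw [← Finset.sum_sub_distrib]
    rw [Finset.sum_eq_single i]
    · simp [sq]
    · intro j _ hj; simp [Ne.symm hj]
    · intro hi; exact absurd (Finset.mem_univ i) hi
  linear_combination hT

lemma ite_sum_const (N t : ℕ) (ht : t ≤ N) (C : ℝ) :
    ∑ i : Fin N, (if (i : ℕ) < t then C else 0) = t * C := by
  rw [Fin.sum_univ_eq_sum_range (fun i => if i < t then C else 0) N, ← Finset.sum_filter]
  have h : (Finset.range N).filter (· < t) = Finset.range t := by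
    ext x; simp [Finset.mem_filter, Finset.mem_range]; omega
  rw [h, Finset.sum_const, Finset.card_range, nsmul_eq_mul]

lemma key (N s i0 : ℕ) (hs : s ≤ N) (hi0 : i0 ≤ N) (z pa ea pb eb : ℝ)
    (hpa : pa + ea = 1) (hpb : pb + eb = 1) :
    (∑ c : Fin N → Bool × Bool,
        (z + (∑ i ∈ Finset.range s, (aF N c i : ℝ)) - ∑ i ∈ Finset.range i0, (bF N c i : ℝ)) ^ 2 *
          ((∏ i ∈ Finset.range N, if aF N c i = 1 then pa else ea) *
            ∏ i ∈ Finset.range N, if bF N c i = 1 then pb else eb))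
      - (∑ c : Fin N → Bool × Bool,
          (z + (∑ i ∈ Finset.range s, (aF N c i : ℝ)) - ∑ i ∈ Finset.range i0, (bF N c i : ℝ)) *
            ((∏ i ∈ Finset.range N, if aF N c i = 1 then pa else ea) *
              ∏ i ∈ Finset.range N, if bF N c i = 1 then pb else eb)) ^ 2
    = s * pa * ea + i0 * pb * eb := by
  obtain rfl : ea = 1 - pa := by linarith
  obtain rfl : eb = 1 - pb := by linarith
  set w : Bool × Bool → ℝ := fun v => (cond v.1 pa (1 - pa)) * (cond v.2 pb (1 - pb)) with hwdef
  have hw : ∑ v, w v = 1 := by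
    simp only [hwdef, Fintype.sum_prod_type, Fintype.sum_bool, cond_true, cond_false]
    ring
  set φ : Fin N → Bool × Bool → ℝ := fun i v =>
    (if (i : ℕ) < s then (1 : ℝ) else 0) * (cond v.1 1 0)
      - (if (i : ℕ) < i0 then (1 : ℝ) else 0) * (cond v.2 1 0) with hφdef
  have haF : ∀ (c : Fin N → Bool × Bool) (i : Fin N), aF N c (i : ℕ) = if (c i).1 then 1 else 0 := by
    intro c i; simp [aF, i.isLt]
  have hbF : ∀ (c : Fin N → Bool × Bool) (i : Fin N), bF N c (i : ℕ) = if (c i).2 then 1 else 0 := by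
    intro c i; simp [bF, i.isLt]
  have hW : ∀ c : Fin N → Bool × Bool,
      (∏ i ∈ Finset.range N, if aF N c i = 1 then pa else 1 - pa) *
        (∏ i ∈ Finset.range N, if bF N c i = 1 then pb else 1 - pb) = ∏ j, w (c j) := by
    intro c
    rw [hwdef]
    rw [Finset.prod_mul_distrib]
    congr 1
    · rw [← Fin.prod_univ_eq_prod_range (fun i => if aF N c i = 1 then pa else 1 - pa) N]
      apply Finset.prod_congr rfl; intro i _
      rw [haF c i]; cases (c i).1 <;> simp
    · rw [← Fin.prod_univ_eq_prod_range (fun i => if bF N c i = 1 then pb else 1 - pb) N]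
      apply Finset.prod_congr rfl; intro i _
      rw [hbF c i]; cases (c i).2 <;> simp
  have hsum : ∀ (t : ℕ), t ≤ N → ∀ (f : ℕ → ℝ),
      ∑ i ∈ Finset.range t, f i = ∑ i : Fin N, (if (i : ℕ) < t then f i else 0) := by
    intro t ht f
    rw [Fin.sum_univ_eq_sum_range (fun i => if i < t then f i else 0) N, ← Finset.sum_filter]
    congr 1
    ext x; simp [Finset.mem_filter, Finset.mem_range]; omega
  have hD : ∀ c : Fin N → Bool × Bool,
      z + (∑ i ∈ Finset.range s, (aF N c i : ℝ)) - ∑ i ∈ Finset.range i0, (bF N c i : ℝ)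
        = z + ∑ i, φ i (c i) := by
    intro c
    rw [hsum s hs (fun i => (aF N c i : ℝ)), hsum i0 hi0 (fun i => (bF N c i : ℝ))]
    have h1 : ∑ i : Fin N, (if (i : ℕ) < s then ((aF N c (i : ℕ) : ℕ) : ℝ) else 0)
        = ∑ i : Fin N, (if (i : ℕ) < s then (1 : ℝ) else 0) * (cond (c i).1 1 0) := by
      apply Finset.sum_congr rfl; intro i _
      rw [haF c i]; by_cases hx : (i : ℕ) < s <;> cases (c i).1 <;> simp [hx]
    have h2 : ∑ i : Fin N, (if (i : ℕ) < i0 then ((bF N c (i : ℕ) : ℕ) : ℝ) else 0)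
        = ∑ i : Fin N, (if (i : ℕ) < i0 then (1 : ℝ) else 0) * (cond (c i).2 1 0) := by
      apply Finset.sum_congr rfl; intro i _
      rw [hbF c i]; by_cases hx : (i : ℕ) < i0 <;> cases (c i).2 <;> simp [hx]
    rw [h1, h2]
    simp only [hφdef]
    rw [Finset.sum_sub_distrib]
    ring
  simp only [hD, hW]
  rw [core N w hw φ z]
  have hper : ∀ i : Fin N,
      (∑ v, φ i v * φ i v * w v - (∑ v, φ i v * w v) ^ 2)
        = (if (i : ℕ) < s then pa * (1 - pa) else 0)
          + (if (i : ℕ) < i0 then pb * (1 - pb) else 0) := by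
    intro i
    by_cases h1 : (i : ℕ) < s <;> by_cases h2 : (i : ℕ) < i0 <;>
      simp only [hφdef, hwdef, h1, h2, if_true, if_false,
        Fintype.sum_prod_type, Fintype.sum_bool, cond_true, cond_false] <;> ring
  simp only [hper]
  rw [Finset.sum_add_distrib, ite_sum_const N s hs, ite_sum_const N i0 hi0]
  ring

def cfgSet (N : ℕ) {Ω : Type*} (X Y : ℕ → Ω → ℕ) (c : Fin N → Bool × Bool) : Set Ω :=
  {ω | ∀ i < N, X i ω = aF N c i ∧ Y i ω = bF N c i}

lemma cfgSet_measurable {Ω : Type*} {mΩ : MeasurableSpace Ω} (N : ℕ) (X Y : ℕ → Ω → ℕ)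
    (hXm : ∀ i, Measurable[mΩ] (X i)) (hYm : ∀ i, Measurable[mΩ] (Y i)) (c : Fin N → Bool × Bool) :
    MeasurableSet[mΩ] (cfgSet N X Y c) := by
  have h : cfgSet N X Y c
      = ⋂ i ∈ Set.Iio N, ((X i ⁻¹' {aF N c i}) ∩ (Y i ⁻¹' {bF N c i})) := by
    ext ω
    simp only [cfgSet, Set.mem_setOf_eq, Set.mem_iInter, Set.mem_inter_iff, Set.mem_preimage,
      Set.mem_singleton_iff, Set.mem_Iio]
  rw [h]
  exact MeasurableSet.biInter (Set.to_countable _) fun i _ =>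
    ((hXm i) (measurableSet_singleton _)).inter ((hYm i) (measurableSet_singleton _))

lemma partition {Ω : Type*} (N : ℕ) (X Y : ℕ → Ω → ℕ)
    (hX1 : ∀ i ω, X i ω ≤ 1) (hY1 : ∀ i ω, Y i ω ≤ 1) (ω : Ω) :
    ∑ c : Fin N → Bool × Bool, Set.indicator (cfgSet N X Y c) (fun _ => (1 : ℝ)) ω = 1 := by
  classical
  set c₀ : Fin N → Bool × Bool := fun i => (decide (X (i : ℕ) ω = 1), decide (Y (i : ℕ) ω = 1))
    with hc₀
  rw [Finset.sum_eq_single c₀]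
  · rw [Set.indicator_of_mem]
    intro i hi
    constructor
    · rcases Nat.le_one_iff_eq_zero_or_eq_one.mp (hX1 i ω) with hx | hx <;>
        simp [aF, hi, hc₀, hx]
    · rcases Nat.le_one_iff_eq_zero_or_eq_one.mp (hY1 i ω) with hx | hx <;>
        simp [bF, hi, hc₀, hx]
  · intro c _ hc
    rw [Set.indicator_of_notMem]
    intro hmem
    apply hc
    funext i
    obtain ⟨hxi, hyi⟩ := hmem (i : ℕ) i.isLt
    have hxa : aF N c (i : ℕ) = if (c i).1 then 1 else 0 := by simp [aF, i.isLt]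
    have hya : bF N c (i : ℕ) = if (c i).2 then 1 else 0 := by simp [bF, i.isLt]
    rw [hxa] at hxi; rw [hya] at hyi
    have hx' : (c i).1 = decide (X (i : ℕ) ω = 1) := by
      rw [hxi]; cases hb : (c i).1 <;> simp [hb]
    have hy' : (c i).2 = decide (Y (i : ℕ) ω = 1) := by
      rw [hyi]; cases hb : (c i).2 <;> simp [hb]
    show c i = c₀ i
    rw [hc₀]
    exact Prod.ext hx' hy'
  · intro h; exact absurd (Finset.mem_univ c₀) h

theorem condexp_config {Ω : Type*} {mΩ : MeasurableSpace Ω} (μ : Measure Ω) [IsProbabilityMeasure μ]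
    {m : MeasurableSpace Ω} (hm : m ≤ mΩ)
    (N : ℕ) (X Y : ℕ → Ω → ℕ)
    (hX1 : ∀ i ω, X i ω ≤ 1) (hY1 : ∀ i ω, Y i ω ≤ 1)
    (hXm : ∀ i, Measurable[mΩ] (X i)) (hYm : ∀ i, Measurable[mΩ] (Y i))
    (P : (Fin N → Bool × Bool) → Ω → ℝ)
    (hP : ∀ c, μ[Set.indicator (cfgSet N X Y c) (fun _ => (1 : ℝ)) | m] =ᵐ[μ] P c)
    (H : (Fin N → Bool × Bool) → Ω → ℝ)
    (hHm : ∀ c, Measurable[m] (H c))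
    (C : ℝ) (hHb : ∀ c ω, |H c ω| ≤ C)
    (Z : Ω → ℝ) (hZm : Measurable[mΩ] Z)
    (hZH : ∀ c, ∀ ω ∈ cfgSet N X Y c, Z ω = H c ω) :
    μ[Z | m] =ᵐ[μ] fun ω => ∑ c : Fin N → Bool × Bool, H c ω * P c ω := by
  classical
  set ind : (Fin N → Bool × Bool) → Ω → ℝ :=
    fun c => Set.indicator (cfgSet N X Y c) (fun _ => (1 : ℝ)) with hind
  have hcfg : ∀ c : Fin N → Bool × Bool, MeasurableSet[mΩ] (cfgSet N X Y c) :=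
    cfgSet_measurable N X Y hXm hYm
  have hindm : ∀ c, Measurable[mΩ] (ind c) := fun c =>
    (measurable_const.indicator (hcfg c))
  have hZeq : Z = ∑ c : Fin N → Bool × Bool, fun ω => H c ω * ind c ω := by
    funext ω
    rw [Finset.sum_apply]
    have hpart := partition N X Y hX1 hY1 ω
    calc Z ω = Z ω * ∑ c : Fin N → Bool × Bool, ind c ω := by rw [hpart, mul_one]
      _ = ∑ c : Fin N → Bool × Bool, Z ω * ind c ω := by rw [Finset.mul_sum]
      _ = ∑ c : Fin N → Bool × Bool, H c ω * ind c ω := by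
          apply Finset.sum_congr rfl; intro c _
          by_cases hc : ω ∈ cfgSet N X Y c
          · rw [hZH c ω hc]
          · simp [hind, Set.indicator_of_notMem hc]
  have hint : ∀ c : Fin N → Bool × Bool, Integrable (fun ω => H c ω * ind c ω) μ := by
    intro c
    refine Integrable.mono' (integrable_const (|C| : ℝ))
      ((((hHm c).mono hm le_rfl).mul (hindm c)).aestronglyMeasurable) (ae_of_all _ ?_)
    · intro ω
      rw [Real.norm_eq_abs, abs_mul]
      have h1 : |ind c ω| ≤ 1 := by
        rw [hind]; simp only [Set.indicator]; split <;> simp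
      have h2 : |H c ω| ≤ |C| := le_trans (hHb c ω) (le_abs_self C)
      calc |H c ω| * |ind c ω| ≤ |C| * 1 :=
            mul_le_mul h2 h1 (abs_nonneg _) (abs_nonneg _)
        _ = |C| := mul_one _
  have hintind : ∀ c : Fin N → Bool × Bool, Integrable (ind c) μ :=
    fun c => Integrable.indicator (μ := μ) (integrable_const (1 : ℝ)) (hcfg c)
  calc μ[Z | m] = μ[∑ c : Fin N → Bool × Bool, fun ω => H c ω * ind c ω | m] := by rw [hZeq]
    _ =ᵐ[μ] ∑ c : Fin N → Bool × Bool, μ[fun ω => H c ω * ind c ω | m] :=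
        condExp_finsetSum (fun c _ => hint c) m
    _ =ᵐ[μ] fun ω => ∑ c : Fin N → Bool × Bool, H c ω * P c ω := by
        have hc : ∀ c : Fin N → Bool × Bool,
            μ[fun ω => H c ω * ind c ω | m] =ᵐ[μ] fun ω => H c ω * P c ω := by
          intro c
          have h1 : μ[fun ω => H c ω * ind c ω | m] =ᵐ[μ] fun ω => H c ω * (μ[ind c | m]) ω := by
            have := condExp_mul_of_stronglyMeasurable_left (μ := μ) (m := m)
              ((hHm c).stronglyMeasurable) (hint c) (hintind c)
            exact this
          refine h1.trans ?_
          filter_upwards [hP c] with ω hω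
          rw [hω]
        have hall : ∀ᵐ ω ∂μ, ∀ c : Fin N → Bool × Bool,
            (μ[fun ω => H c ω * ind c ω | m]) ω = H c ω * P c ω := by
          rw [ae_all_iff]
          exact hc
        filter_upwards [hall] with ω hω
        rw [Finset.sum_apply]
        exact Finset.sum_congr rfl fun c _ => hω c

end SIRaux

/-- The filtration `𝓕_k = σ((S_j, I_j) : j ≤ k)` generated by the susceptible and infectious
counts up to time `k`. -/
def sirFiltration {Ω : Type*} (S I : ℕ → Ω → ℕ) (k : ℕ) : MeasurableSpace Ω :=
  ⨆ j ∈ Finset.range (k + 1),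
    MeasurableSpace.comap (fun ω => (S j ω, I j ω)) inferInstance

/-- The discrete stochastic SIR model on one node with total population `N`, time step `h > 0`
and parameters `λ ≥ 0` (infection), `γ > 0` (recovery).  `S, I, R` are the susceptible,
infectious and recovered counts; `X k i` and `Y k i` are the `{0,1}`-valued infection and
recovery indicators used in the step from time `k` to `k+1`.  Conditionally on
`𝓕_k = σ((S_j, I_j) : j ≤ k)`, the combined family `(X k i)_i, (Y k i)_i` is independent,
each `X k i` being Bernoulli of parameter `1 - e^{-λ I_k h}` and each `Y k i` Bernoulli of
parameter `1 - e^{-γ h}`; this is expressed by the product form of the conditional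
probability of every joint configuration of values.  The initial values are deterministic. -/
def IsSIRModel {Ω : Type*} [MeasurableSpace Ω] (μ : Measure Ω)
    (N : ℕ) (h lam gam : ℝ)
    (S I R : ℕ → Ω → ℕ) (X Y : ℕ → ℕ → Ω → ℕ) : Prop :=
  IsProbabilityMeasure μ ∧
  0 < h ∧ 0 ≤ lam ∧ 0 < gam ∧
  (∀ k ω, S k ω + I k ω + R k ω = N) ∧
  (∀ k i ω, X k i ω ≤ 1) ∧
  (∀ k i ω, Y k i ω ≤ 1) ∧
  (∀ k, Measurable (S k)) ∧ (∀ k, Measurable (I k)) ∧ (∀ k, Measurable (R k)) ∧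
  (∀ k i, Measurable (X k i)) ∧ (∀ k i, Measurable (Y k i)) ∧
  (∀ ω ω', S 0 ω = S 0 ω' ∧ I 0 ω = I 0 ω' ∧ R 0 ω = R 0 ω') ∧
  (∀ k ω, S (k + 1) ω + (∑ i ∈ Finset.range (S k ω), X k i ω) = S k ω) ∧
  (∀ k ω, I (k + 1) ω + (∑ i ∈ Finset.range (I k ω), Y k i ω)
      = I k ω + ∑ i ∈ Finset.range (S k ω), X k i ω) ∧
  (∀ k ω, R (k + 1) ω = R k ω + ∑ i ∈ Finset.range (I k ω), Y k i ω) ∧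
  (∀ k : ℕ, ∀ a b : ℕ → ℕ, (∀ i, a i ≤ 1) → (∀ i, b i ≤ 1) →
    μ[Set.indicator {ω | ∀ i < N, X k i ω = a i ∧ Y k i ω = b i} (fun _ => (1 : ℝ))
        | sirFiltration S I k]
      =ᵐ[μ] fun ω =>
        (∏ i ∈ Finset.range N,
          (if a i = 1 then 1 - exp (-(lam * (I k ω : ℝ) * h))
            else exp (-(lam * (I k ω : ℝ) * h)))) *
        (∏ i ∈ Finset.range N,
          (if b i = 1 then 1 - exp (-(gam * h)) else exp (-(gam * h)))))

/-- In the discrete stochastic SIR model, for every `k`, the conditional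
variance `Var(I_{k+1} | 𝓕_k) := 𝔼[I_{k+1}² | 𝓕_k] - (𝔼[I_{k+1} | 𝓕_k])²` satisfies, a.s.,
`Var(I_{k+1} | 𝓕_k) = S_k (1 - e^{-λ I_k h}) e^{-λ I_k h} + I_k (1 - e^{-γh}) e^{-γh}`. -/
theorem sir_cond_variance_one_step
    {Ω : Type*} [MeasurableSpace Ω] (μ : Measure Ω)
    (N : ℕ) (h lam gam : ℝ)
    (S I R : ℕ → Ω → ℕ) (X Y : ℕ → ℕ → Ω → ℕ)
    (hM : IsSIRModel μ N h lam gam S I R X Y) :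
    ∀ k : ℕ,
      (fun ω =>
          (μ[fun ω' => ((I (k + 1) ω' : ℝ)) ^ 2 | sirFiltration S I k]) ω
            - ((μ[fun ω' => (I (k + 1) ω' : ℝ) | sirFiltration S I k]) ω) ^ 2)
        =ᵐ[μ] fun ω =>
          (S k ω : ℝ) * (1 - Real.exp (-(lam * (I k ω : ℝ) * h)))
              * Real.exp (-(lam * (I k ω : ℝ) * h))
            + (I k ω : ℝ) * (1 - Real.exp (-(gam * h))) * Real.exp (-(gam * h)) := by
  obtain ⟨hprob, hh, hlam, hgam, hSIR, hX1, hY1, hSm, hIm, hRm, hXm, hYm, hinit,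
    hSrec, hIrec, hRrec, hcond⟩ := hM
  intro k
  haveI := hprob
  have hmle : sirFiltration S I k ≤ ‹MeasurableSpace Ω› := by
    refine iSup₂_le fun j _ => ?_
    exact measurable_iff_comap_le.mp ((hSm j).prodMk (hIm j))
  have hpair : Measurable[sirFiltration S I k] (fun ω => (S k ω, I k ω)) := by
    have h1 : Measurable[MeasurableSpace.comap (fun ω => (S k ω, I k ω)) inferInstance]
        (fun ω => (S k ω, I k ω)) := measurable_iff_comap_le.mpr le_rfl
    exact h1.mono (le_iSup₂ (f := fun j (_ : j ∈ Finset.range (k + 1)) =>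
      MeasurableSpace.comap (fun ω => (S j ω, I j ω)) inferInstance) k
      (Finset.self_mem_range_succ k)) le_rfl
  have hSk : Measurable[sirFiltration S I k] (S k) := measurable_fst.comp hpair
  have hIk : Measurable[sirFiltration S I k] (I k) := measurable_snd.comp hpair
  have hSle : ∀ ω, S k ω ≤ N := fun ω => by have := hSIR k ω; omega
  have hIle : ∀ ω, I k ω ≤ N := fun ω => by have := hSIR k ω; omega
  -- abbreviations (as plain terms)
  have hP : ∀ c : Fin N → Bool × Bool,
      μ[Set.indicator (SIRaux.cfgSet N (X k) (Y k) c) (fun _ => (1 : ℝ)) | sirFiltration S I k]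
        =ᵐ[μ] (fun c ω =>
          (∏ i ∈ Finset.range N,
            (if SIRaux.aF N c i = 1 then 1 - exp (-(lam * (I k ω : ℝ) * h))
              else exp (-(lam * (I k ω : ℝ) * h)))) *
          (∏ i ∈ Finset.range N,
            (if SIRaux.bF N c i = 1 then 1 - exp (-(gam * h)) else exp (-(gam * h))))) c := by
    intro c
    exact hcond k (SIRaux.aF N c) (SIRaux.bF N c)
      (SIRaux.aF_le_one N c) (SIRaux.bF_le_one N c)
  have hFmeas : ∀ c : Fin N → Bool × Bool,
      Measurable[sirFiltration S I k] (fun ω =>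
        (I k ω : ℝ) + (∑ i ∈ Finset.range (S k ω), (SIRaux.aF N c i : ℝ))
          - ∑ i ∈ Finset.range (I k ω), (SIRaux.bF N c i : ℝ)) := by
    intro c
    apply Measurable.sub
    · apply Measurable.add
      · exact (measurable_from_top (f := (Nat.cast : ℕ → ℝ))).comp hIk
      · exact (measurable_from_top
          (f := fun n => ∑ i ∈ Finset.range n, (SIRaux.aF N c i : ℝ))).comp hSk
    · exact (measurable_from_top
        (f := fun n => ∑ i ∈ Finset.range n, (SIRaux.bF N c i : ℝ))).comp hIk
  have hsumA : ∀ (c : Fin N → Bool × Bool) (ω : Ω),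
      (0 : ℝ) ≤ ∑ i ∈ Finset.range (S k ω), (SIRaux.aF N c i : ℝ) ∧
        (∑ i ∈ Finset.range (S k ω), (SIRaux.aF N c i : ℝ)) ≤ N := by
    intro c ω
    constructor
    · exact Finset.sum_nonneg fun i _ => Nat.cast_nonneg _
    · calc ∑ i ∈ Finset.range (S k ω), (SIRaux.aF N c i : ℝ)
          ≤ ∑ i ∈ Finset.range (S k ω), (1 : ℝ) := by
            apply Finset.sum_le_sum
            intro i _
            exact_mod_cast SIRaux.aF_le_one N c i
        _ = S k ω := by rw [Finset.sum_const, Finset.card_range, nsmul_eq_mul, mul_one]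
        _ ≤ N := by exact_mod_cast hSle ω
  have hsumB : ∀ (c : Fin N → Bool × Bool) (ω : Ω),
      (0 : ℝ) ≤ ∑ i ∈ Finset.range (I k ω), (SIRaux.bF N c i : ℝ) ∧
        (∑ i ∈ Finset.range (I k ω), (SIRaux.bF N c i : ℝ)) ≤ N := by
    intro c ω
    constructor
    · exact Finset.sum_nonneg fun i _ => Nat.cast_nonneg _
    · calc ∑ i ∈ Finset.range (I k ω), (SIRaux.bF N c i : ℝ)
          ≤ ∑ i ∈ Finset.range (I k ω), (1 : ℝ) := by
            apply Finset.sum_le_sum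
            intro i _
            exact_mod_cast SIRaux.bF_le_one N c i
        _ = I k ω := by rw [Finset.sum_const, Finset.card_range, nsmul_eq_mul, mul_one]
        _ ≤ N := by exact_mod_cast hIle ω
  have hFbound : ∀ (c : Fin N → Bool × Bool) (ω : Ω),
      |(I k ω : ℝ) + (∑ i ∈ Finset.range (S k ω), (SIRaux.aF N c i : ℝ))
          - ∑ i ∈ Finset.range (I k ω), (SIRaux.bF N c i : ℝ)| ≤ 3 * N := by
    intro c ω
    have h1 := hsumA c ω
    have h2 := hsumB c ω
    have h3 : (0 : ℝ) ≤ (I k ω : ℝ) := Nat.cast_nonneg _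
    have h4 : (I k ω : ℝ) ≤ N := by exact_mod_cast hIle ω
    rw [abs_le]
    constructor <;> [linarith [h1.1, h2.2]; linarith [h1.2, h2.1]]
  have hZH : ∀ c : Fin N → Bool × Bool, ∀ ω ∈ SIRaux.cfgSet N (X k) (Y k) c,
      ((I (k + 1) ω : ℝ)) = (I k ω : ℝ)
        + (∑ i ∈ Finset.range (S k ω), (SIRaux.aF N c i : ℝ))
        - ∑ i ∈ Finset.range (I k ω), (SIRaux.bF N c i : ℝ) := by
    intro c ω hω
    have hrec := hIrec k ω
    have hXa : ∀ i ∈ Finset.range (S k ω), X k i ω = SIRaux.aF N c i := fun i hi =>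
      (hω i (lt_of_lt_of_le (Finset.mem_range.mp hi) (hSle ω))).1
    have hYb : ∀ i ∈ Finset.range (I k ω), Y k i ω = SIRaux.bF N c i := fun i hi =>
      (hω i (lt_of_lt_of_le (Finset.mem_range.mp hi) (hIle ω))).2
    rw [Finset.sum_congr rfl hXa, Finset.sum_congr rfl hYb] at hrec
    have hcast := congrArg (Nat.cast : ℕ → ℝ) hrec
    push_cast at hcast
    linarith
  have hcondZ := SIRaux.condexp_config μ hmle N (X k) (Y k)
    (fun i ω => hX1 k i ω) (fun i ω => hY1 k i ω) (hXm k) (hYm k)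
    (fun c ω =>
      (∏ i ∈ Finset.range N,
        (if SIRaux.aF N c i = 1 then 1 - exp (-(lam * (I k ω : ℝ) * h))
          else exp (-(lam * (I k ω : ℝ) * h)))) *
      (∏ i ∈ Finset.range N,
        (if SIRaux.bF N c i = 1 then 1 - exp (-(gam * h)) else exp (-(gam * h)))))
    hP
    (fun c ω =>
      (I k ω : ℝ) + (∑ i ∈ Finset.range (S k ω), (SIRaux.aF N c i : ℝ))
        - ∑ i ∈ Finset.range (I k ω), (SIRaux.bF N c i : ℝ))
    hFmeas (3 * N) hFbound
    (fun ω' => (I (k + 1) ω' : ℝ))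
    ((measurable_from_top (f := (Nat.cast : ℕ → ℝ))).comp (hIm (k + 1)))
    hZH
  have hcondZ2 := SIRaux.condexp_config μ hmle N (X k) (Y k)
    (fun i ω => hX1 k i ω) (fun i ω => hY1 k i ω) (hXm k) (hYm k)
    (fun c ω =>
      (∏ i ∈ Finset.range N,
        (if SIRaux.aF N c i = 1 then 1 - exp (-(lam * (I k ω : ℝ) * h))
          else exp (-(lam * (I k ω : ℝ) * h)))) *
      (∏ i ∈ Finset.range N,
        (if SIRaux.bF N c i = 1 then 1 - exp (-(gam * h)) else exp (-(gam * h)))))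
    hP
    (fun c ω =>
      ((I k ω : ℝ) + (∑ i ∈ Finset.range (S k ω), (SIRaux.aF N c i : ℝ))
        - ∑ i ∈ Finset.range (I k ω), (SIRaux.bF N c i : ℝ)) ^ 2)
    (fun c => (hFmeas c).pow_const 2)
    ((3 * N) ^ 2)
    (fun c ω => by
      rw [abs_pow]
      exact pow_le_pow_left₀ (abs_nonneg _) (hFbound c ω) 2)
    (fun ω' => ((I (k + 1) ω' : ℝ)) ^ 2)
    (((measurable_from_top (f := (Nat.cast : ℕ → ℝ))).comp (hIm (k + 1))).pow_const 2)
    (fun c ω hω => congrArg (fun x : ℝ => x ^ 2) (hZH c ω hω))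
  filter_upwards [hcondZ, hcondZ2] with ω e1 e2
  rw [e1, e2]
  exact SIRaux.key N (S k ω) (I k ω) (hSle ω) (hIle ω) ((I k ω : ℝ))
    (1 - exp (-(lam * (I k ω : ℝ) * h))) (exp (-(lam * (I k ω : ℝ) * h)))
    (1 - exp (-(gam * h))) (exp (-(gam * h))) (by ring) (by ring)
end

section
/- In the discrete stochastic SIR model, for every k ∈ ℕ the conditional covariance of the numbers of susceptible and infectious individuals after one step satisfies, almost surely: Cov(S_{k+1}, I_{k+1} | 𝓕_k) = −S_k·(1 − e^{−λ I_k h})·e^{−λ I_k h}, where Cov(Z, W | 𝓕_k) := 𝔼[ZW | 𝓕_k] − 𝔼[Z | 𝓕_k]·𝔼[W | 𝓕_k]. In particular |Cov(S_{k+1}, I_{k+1} | 𝓕_k)| ≤ λ N² h almost surely. -/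
open MeasureTheory ProbabilityTheory Filter Real

lemma sirAux.ae_finset_sum {Ω : Type*} [MeasurableSpace Ω] {μ : Measure Ω} {ι : Type*}
    (s : Finset ι) {f g : ι → Ω → ℝ} (h : ∀ i ∈ s, f i =ᵐ[μ] g i) :
    (∑ i ∈ s, f i) =ᵐ[μ] ∑ i ∈ s, g i := by
  classical
  induction s using Finset.induction_on with
  | empty => simp
  | insert a s' hi ih =>
    rw [Finset.sum_insert hi, Finset.sum_insert hi]
    exact (h a (Finset.mem_insert_self a s')).add (ih fun i hisp => h i (Finset.mem_insert_of_mem hisp))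

lemma sirAux.int_bdd {Ω : Type*} [MeasurableSpace Ω] {μ : Measure Ω} [IsFiniteMeasure μ]
    {f : Ω → ℝ} (hf : Measurable f) (C : ℝ) (h : ∀ ω, |f ω| ≤ C) : Integrable f μ :=
  ⟨hf.aestronglyMeasurable,
    HasFiniteIntegral.of_bounded (C := C) (ae_of_all μ fun ω => by
      simpa [Real.norm_eq_abs] using h ω)⟩

lemma sirAux.sum_powerset_ite (u v : Finset ℕ) (hv : v ⊆ u) (p q : ℝ) :
    ∑ s ∈ u.powerset, (if v ⊆ s then (1:ℝ) else 0) * ∏ i ∈ u, (if i ∈ s then p else q)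
      = p ^ v.card * (p + q) ^ (u.card - v.card) := by
  classical
  have key : ∀ s ∈ u.powerset,
      (if v ⊆ s then (1:ℝ) else 0) * ∏ i ∈ u, (if i ∈ s then p else q)
        = (∏ _i ∈ s, p) * ∏ i ∈ u \ s, (if i ∈ v then (0:ℝ) else q) := by
    intro s hs
    rw [Finset.mem_powerset] at hs
    by_cases hvs : v ⊆ s
    · rw [if_pos hvs, one_mul, ← Finset.prod_sdiff hs, mul_comm]
      congr 1
      · exact Finset.prod_congr rfl fun i hi => if_pos hi
      · exact Finset.prod_congr rfl fun i hi => by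
          rw [if_neg (Finset.mem_sdiff.mp hi).2,
            if_neg fun hiv => (Finset.mem_sdiff.mp hi).2 (hvs hiv)]
    · rw [if_neg hvs, zero_mul]
      obtain ⟨i, hiv, his⟩ := Finset.not_subset.mp hvs
      exact (mul_eq_zero_of_right (∏ _i ∈ s, p)
        (Finset.prod_eq_zero (Finset.mem_sdiff.mpr ⟨hv hiv, his⟩) (if_pos hiv))).symm
  rw [Finset.sum_congr rfl key, ← Finset.prod_add, ← Finset.prod_sdiff hv]
  have h1 : ∏ i ∈ v, (p + if i ∈ v then (0:ℝ) else q) = p ^ v.card := by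
    rw [Finset.prod_congr rfl fun i hi => by rw [if_pos hi, add_zero]]
    simp
  have h2 : ∏ i ∈ u \ v, (p + if i ∈ v then (0:ℝ) else q) = (p + q) ^ (u.card - v.card) := by
    rw [Finset.prod_congr rfl fun i hi => by rw [if_neg (Finset.mem_sdiff.mp hi).2]]
    simp [Finset.card_sdiff_of_subset hv]
  rw [h1, h2, mul_comm]

lemma sirAux.sum_ite_mul (M n : ℕ) (hn : n ≤ M) (f : ℕ → ℝ) :
    ∑ i ∈ Finset.range M, (if i < n then (1:ℝ) else 0) * f i
      = ∑ i ∈ Finset.range n, f i := by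
  rw [← Finset.sum_subset (Finset.range_subset_range.mpr hn)
    (fun i _ hni => by
      rw [Finset.mem_range] at hni
      rw [if_neg (by omega), zero_mul])]
  exact Finset.sum_congr rfl fun i hi => by
    rw [if_pos (Finset.mem_range.mp hi), one_mul]


/-- In the discrete stochastic SIR model, for every `k`, the conditional
covariance `Cov(S_{k+1}, I_{k+1} | 𝓕_k) := 𝔼[S_{k+1} I_{k+1} | 𝓕_k]
 - 𝔼[S_{k+1} | 𝓕_k] 𝔼[I_{k+1} | 𝓕_k]` equals `-S_k (1 - e^{-λ I_k h}) e^{-λ I_k h}` a.s.;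
in particular its absolute value is a.s. bounded by `λ N² h`. -/
theorem sir_cond_covariance_one_step
    {Ω : Type*} [MeasurableSpace Ω] (μ : Measure Ω)
    (N : ℕ) (h lam gam : ℝ)
    (S I R : ℕ → Ω → ℕ) (X Y : ℕ → ℕ → Ω → ℕ)
    (hM : IsSIRModel μ N h lam gam S I R X Y) :
    ∀ k : ℕ,
      ((fun ω =>
          (μ[fun ω' => (S (k + 1) ω' : ℝ) * (I (k + 1) ω' : ℝ) | sirFiltration S I k]) ω
            - (μ[fun ω' => (S (k + 1) ω' : ℝ) | sirFiltration S I k]) ω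
              * (μ[fun ω' => (I (k + 1) ω' : ℝ) | sirFiltration S I k]) ω)
        =ᵐ[μ] fun ω =>
          -((S k ω : ℝ) * (1 - Real.exp (-(lam * (I k ω : ℝ) * h)))
              * Real.exp (-(lam * (I k ω : ℝ) * h)))) ∧
      (∀ᵐ ω ∂μ,
        |(μ[fun ω' => (S (k + 1) ω' : ℝ) * (I (k + 1) ω' : ℝ) | sirFiltration S I k]) ω
            - (μ[fun ω' => (S (k + 1) ω' : ℝ) | sirFiltration S I k]) ω
              * (μ[fun ω' => (I (k + 1) ω' : ℝ) | sirFiltration S I k]) ω|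
          ≤ lam * (N : ℝ) ^ 2 * h) := by
  classical
  obtain ⟨hProb, hh, hlam, hgam, hsum, hX1, hY1, hSmeas, hImeas, hRmeas, hXmeas, hYmeas,
    hinit, hSrec, hIrec, hRrec, hcond⟩ := hM
  intro k
  haveI := hProb
  have hm : sirFiltration S I k ≤ ‹MeasurableSpace Ω› :=
    iSup₂_le fun j _ => Measurable.comap_le ((hSmeas j).prodMk (hImeas j))
  haveI : SigmaFinite (μ.trim hm) := by infer_instance
  have hSk : Measurable[sirFiltration S I k] (S k) := by
    have h1 : Measurable[MeasurableSpace.comap (fun ω => (S k ω, I k ω)) inferInstance]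
        (fun ω => (S k ω, I k ω)) := Measurable.of_comap_le le_rfl
    have h2 : MeasurableSpace.comap (fun ω => (S k ω, I k ω)) inferInstance
        ≤ sirFiltration S I k :=
      le_iSup_of_le k (le_iSup_of_le (Finset.self_mem_range_succ k) le_rfl)
    exact (measurable_fst.comp h1).mono h2 le_rfl
  have hIk : Measurable[sirFiltration S I k] (I k) := by
    have h1 : Measurable[MeasurableSpace.comap (fun ω => (S k ω, I k ω)) inferInstance]
        (fun ω => (S k ω, I k ω)) := Measurable.of_comap_le le_rfl
    have h2 : MeasurableSpace.comap (fun ω => (S k ω, I k ω)) inferInstance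
        ≤ sirFiltration S I k :=
      le_iSup_of_le k (le_iSup_of_le (Finset.self_mem_range_succ k) le_rfl)
    exact (measurable_snd.comp h1).mono h2 le_rfl
  have hSrm : StronglyMeasurable[sirFiltration S I k] (fun ω => (S k ω : ℝ)) :=
    (measurable_from_top.comp hSk).stronglyMeasurable
  have hIrm : StronglyMeasurable[sirFiltration S I k] (fun ω => (I k ω : ℝ)) :=
    (measurable_from_top.comp hIk).stronglyMeasurable
  have hSle : ∀ j ω, S j ω ≤ N := fun j ω => by have := hsum j ω; omega
  have hIle : ∀ j ω, I j ω ≤ N := fun j ω => by have := hsum j ω; omega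
  set pf : Ω → ℝ := fun ω => 1 - Real.exp (-(lam * (I k ω : ℝ) * h)) with hpf
  set qf : Ω → ℝ := fun ω => Real.exp (-(lam * (I k ω : ℝ) * h)) with hqf
  set uu : ℝ := Real.exp (-(gam * h)) with huu
  set rr : ℝ := 1 - uu with hrr
  set P : Finset (Finset ℕ) := (Finset.range N).powerset with hP
  set cfgX : Ω → Finset ℕ := fun ω => (Finset.range N).filter fun i => X k i ω = 1 with hcfgX
  set cfgY : Ω → Finset ℕ := fun ω => (Finset.range N).filter fun i => Y k i ω = 1 with hcfgY
  set Esets : Finset ℕ → Finset ℕ → Set Ω := fun s t =>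
    {ω | ∀ i < N, X k i ω = (if i ∈ s then 1 else 0) ∧ Y k i ω = (if i ∈ t then 1 else 0)}
    with hEsets
  have hEmeas : ∀ s t, MeasurableSet (Esets s t) := by
    intro s t
    have heq : Esets s t = ⋂ i, ⋂ (_ : i < N),
        ((X k i) ⁻¹' {if i ∈ s then 1 else 0} ∩ (Y k i) ⁻¹' {if i ∈ t then 1 else 0}) := by
      rw [hEsets]; ext ω; simp [Set.mem_iInter, Set.mem_setOf_eq]
    rw [heq]
    exact MeasurableSet.iInter fun i => MeasurableSet.iInter fun _ =>
      (hXmeas k i (measurableSet_singleton _)).inter (hYmeas k i (measurableSet_singleton _))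
  have hmem : ∀ (ω : Ω) (s t : Finset ℕ), s ∈ P → t ∈ P →
      (ω ∈ Esets s t ↔ s = cfgX ω ∧ t = cfgY ω) := by
    intro ω s t hs ht
    rw [hP, Finset.mem_powerset] at hs ht
    rw [hEsets]
    constructor
    · intro hE
      constructor
      · ext i
        simp only [hcfgX, Finset.mem_filter, Finset.mem_range]
        constructor
        · intro his
          have hiN : i < N := Finset.mem_range.mp (hs his)
          have hXi := (hE i hiN).1
          rw [if_pos his] at hXi
          exact ⟨hiN, hXi⟩
        · rintro ⟨hiN, hXi⟩
          by_contra his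
          have := (hE i hiN).1
          rw [if_neg his] at this
          omega
      · ext i
        simp only [hcfgY, Finset.mem_filter, Finset.mem_range]
        constructor
        · intro his
          have hiN : i < N := Finset.mem_range.mp (ht his)
          have hYi := (hE i hiN).2
          rw [if_pos his] at hYi
          exact ⟨hiN, hYi⟩
        · rintro ⟨hiN, hYi⟩
          by_contra his
          have := (hE i hiN).2
          rw [if_neg his] at this
          omega
    · rintro ⟨rfl, rfl⟩
      intro i hiN
      constructor
      · by_cases hXi : X k i ω = 1
        · simp [hcfgX, Finset.mem_filter, Finset.mem_range, hiN, hXi]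
        · have h0 : X k i ω = 0 := by have := hX1 k i ω; omega
          simp [hcfgX, Finset.mem_filter, Finset.mem_range, hXi, h0]
      · by_cases hYi : Y k i ω = 1
        · simp [hcfgY, Finset.mem_filter, Finset.mem_range, hiN, hYi]
        · have h0 : Y k i ω = 0 := by have := hY1 k i ω; omega
          simp [hcfgY, Finset.mem_filter, Finset.mem_range, hYi, h0]
  have hcond' : ∀ s ∈ P, ∀ t ∈ P,
      μ[Set.indicator (Esets s t) (fun _ => (1:ℝ))|sirFiltration S I k] =ᵐ[μ]
      fun ω => (∏ i ∈ Finset.range N, if i ∈ s then pf ω else qf ω) *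
        (∏ i ∈ Finset.range N, if i ∈ t then rr else uu) := by
    intro s _ t _
    have h0 := hcond k (fun i => if i ∈ s then 1 else 0) (fun i => if i ∈ t then 1 else 0)
      (fun i => by by_cases hi : i ∈ s <;> simp [hi]) (fun i => by by_cases hi : i ∈ t <;> simp [hi])
    refine EventuallyEq.trans h0 (ae_of_all μ fun ω => ?_)
    simp only []
    congr 1
    · refine Finset.prod_congr rfl fun i _ => ?_
      by_cases hi : i ∈ s <;> simp [hi, hpf, hqf]
    · refine Finset.prod_congr rfl fun i _ => ?_
      by_cases hi : i ∈ t <;> simp [hi, hrr, huu]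
  have hkey : ∀ φ : Finset ℕ → Finset ℕ → ℝ,
      μ[(fun ω => φ (cfgX ω) (cfgY ω))|sirFiltration S I k] =ᵐ[μ]
      fun ω => ∑ s ∈ P, ∑ t ∈ P, φ s t *
        ((∏ i ∈ Finset.range N, if i ∈ s then pf ω else qf ω) *
         (∏ i ∈ Finset.range N, if i ∈ t then rr else uu)) := by
    intro φ
    have hrw : (fun ω => φ (cfgX ω) (cfgY ω))
        = ∑ pr ∈ P ×ˢ P, (φ pr.1 pr.2 • Set.indicator (Esets pr.1 pr.2) (fun _ => (1:ℝ))) := by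
      funext ω
      rw [Finset.sum_apply]
      have hterm : ∀ pr ∈ P ×ˢ P,
          (φ pr.1 pr.2 • Set.indicator (Esets pr.1 pr.2) fun _ => (1:ℝ)) ω
          = if pr = (cfgX ω, cfgY ω) then φ pr.1 pr.2 else 0 := by
        intro pr hpr
        rw [Finset.mem_product] at hpr
        by_cases hin : ω ∈ Esets pr.1 pr.2
        · have hc := (hmem ω pr.1 pr.2 hpr.1 hpr.2).mp hin
          rw [if_pos (Prod.ext hc.1 hc.2)]
          simp [Set.indicator_of_mem hin]
        · rw [if_neg fun hpreq => hin ((hmem ω pr.1 pr.2 hpr.1 hpr.2).mpr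
            ⟨congrArg Prod.fst hpreq, congrArg Prod.snd hpreq⟩)]
          simp [Set.indicator_of_notMem hin]
      rw [Finset.sum_congr rfl hterm,
        Finset.sum_ite_eq' (P ×ˢ P) ((cfgX ω, cfgY ω) : Finset ℕ × Finset ℕ)
          (fun pr => φ pr.1 pr.2)]
      have hmemP : ((cfgX ω, cfgY ω) : Finset ℕ × Finset ℕ) ∈ P ×ˢ P := by
        rw [Finset.mem_product, hP]
        exact ⟨Finset.mem_powerset.mpr (by rw [hcfgX]; exact Finset.filter_subset _ _),
          Finset.mem_powerset.mpr (by rw [hcfgY]; exact Finset.filter_subset _ _)⟩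
      rw [if_pos hmemP]
    rw [hrw]
    have hint : ∀ pr ∈ P ×ˢ P,
        Integrable (φ pr.1 pr.2 • Set.indicator (Esets pr.1 pr.2) fun _ => (1:ℝ)) μ :=
      fun pr _ => ((integrable_const (1:ℝ)).indicator (hEmeas pr.1 pr.2)).smul _
    refine (condExp_finsetSum hint _).trans ?_
    have hterm2 : ∀ pr ∈ P ×ˢ P,
        μ[φ pr.1 pr.2 • Set.indicator (Esets pr.1 pr.2) fun _ => (1:ℝ)|sirFiltration S I k]
        =ᵐ[μ] fun ω => φ pr.1 pr.2 *
          ((∏ i ∈ Finset.range N, if i ∈ pr.1 then pf ω else qf ω) *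
           (∏ i ∈ Finset.range N, if i ∈ pr.2 then rr else uu)) := by
      intro pr hpr
      rw [Finset.mem_product] at hpr
      refine (condExp_smul (φ pr.1 pr.2) _ _).trans ?_
      filter_upwards [hcond' pr.1 hpr.1 pr.2 hpr.2] with ω hw
      simp only [Pi.smul_apply, smul_eq_mul, hw]
    refine (sirAux.ae_finset_sum _ hterm2).trans (ae_of_all μ fun ω => ?_)
    rw [Finset.sum_apply, Finset.sum_product]
  -- pointwise product representation
  have hprodX : ∀ (ω : Ω) (v : Finset ℕ), v ⊆ Finset.range N →
      (∏ i ∈ v, (X k i ω : ℝ)) = if v ⊆ cfgX ω then 1 else 0 := by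
    intro ω v hv
    by_cases hall : v ⊆ cfgX ω
    · rw [if_pos hall]
      apply Finset.prod_eq_one
      intro i hi
      have hXi : X k i ω = 1 := by
        have := hall hi
        rw [hcfgX] at this
        exact (Finset.mem_filter.mp this).2
      rw [hXi]; norm_num
    · rw [if_neg hall]
      obtain ⟨i, hiv, hni⟩ := Finset.not_subset.mp hall
      apply Finset.prod_eq_zero hiv
      have hiN : i < N := Finset.mem_range.mp (hv hiv)
      have hne : X k i ω ≠ 1 := fun h1 => hni (by
        rw [hcfgX]
        exact Finset.mem_filter.mpr ⟨Finset.mem_range.mpr hiN, h1⟩)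
      have h0 : X k i ω = 0 := by have := hX1 k i ω; omega
      rw [h0]; norm_num
  have hprodY : ∀ (ω : Ω) (w : Finset ℕ), w ⊆ Finset.range N →
      (∏ j ∈ w, (Y k j ω : ℝ)) = if w ⊆ cfgY ω then 1 else 0 := by
    intro ω w hw
    by_cases hall : w ⊆ cfgY ω
    · rw [if_pos hall]
      apply Finset.prod_eq_one
      intro i hi
      have hYi : Y k i ω = 1 := by
        have := hall hi
        rw [hcfgY] at this
        exact (Finset.mem_filter.mp this).2
      rw [hYi]; norm_num
    · rw [if_neg hall]
      obtain ⟨i, hiv, hni⟩ := Finset.not_subset.mp hall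
      apply Finset.prod_eq_zero hiv
      have hiN : i < N := Finset.mem_range.mp (hw hiv)
      have hne : Y k i ω ≠ 1 := fun h1 => hni (by
        rw [hcfgY]
        exact Finset.mem_filter.mpr ⟨Finset.mem_range.mpr hiN, h1⟩)
      have h0 : Y k i ω = 0 := by have := hY1 k i ω; omega
      rw [h0]; norm_num
  have hpq1 : ∀ ω : Ω, pf ω + qf ω = 1 := fun ω => by rw [hpf, hqf]; ring
  have hru1 : rr + uu = 1 := by rw [hrr]; ring
  have hbasic : ∀ v w : Finset ℕ, v ⊆ Finset.range N → w ⊆ Finset.range N →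
      μ[(fun ω => (∏ i ∈ v, (X k i ω : ℝ)) * ∏ j ∈ w, (Y k j ω : ℝ))|sirFiltration S I k]
        =ᵐ[μ] fun ω => pf ω ^ v.card * rr ^ w.card := by
    intro v w hv hw
    have hfun : (fun ω => (∏ i ∈ v, (X k i ω:ℝ)) * ∏ j ∈ w, (Y k j ω:ℝ))
        = fun ω => (fun s t => (if v ⊆ s then (1:ℝ) else 0) * (if w ⊆ t then (1:ℝ) else 0))
            (cfgX ω) (cfgY ω) :=
      funext fun ω => by rw [hprodX ω v hv, hprodY ω w hw]
    rw [hfun]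
    refine (hkey (fun s t => (if v ⊆ s then (1:ℝ) else 0) * (if w ⊆ t then (1:ℝ) else 0))).trans
      (ae_of_all μ fun ω => ?_)
    calc ∑ s ∈ P, ∑ t ∈ P, ((if v ⊆ s then (1:ℝ) else 0) * (if w ⊆ t then (1:ℝ) else 0)) *
          ((∏ i ∈ Finset.range N, if i ∈ s then pf ω else qf ω) *
           (∏ i ∈ Finset.range N, if i ∈ t then rr else uu))
        = (∑ s ∈ P, (if v ⊆ s then (1:ℝ) else 0) *
            ∏ i ∈ Finset.range N, if i ∈ s then pf ω else qf ω) *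
          (∑ t ∈ P, (if w ⊆ t then (1:ℝ) else 0) *
            ∏ i ∈ Finset.range N, if i ∈ t then rr else uu) := by
          rw [Finset.sum_mul_sum]
          exact Finset.sum_congr rfl fun s _ => Finset.sum_congr rfl fun t _ => by ring
      _ = (pf ω ^ v.card * (pf ω + qf ω) ^ (N - v.card)) *
          (rr ^ w.card * (rr + uu) ^ (N - w.card)) := by
          rw [hP]
          rw [sirAux.sum_powerset_ite _ _ hv, sirAux.sum_powerset_ite _ _ hw, Finset.card_range]
      _ = pf ω ^ v.card * rr ^ w.card := by
          rw [hpq1 ω, hru1, one_pow, one_pow, mul_one, mul_one]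
  -- integrability and measurability helpers
  have hintb : ∀ (f : Ω → ℝ), Measurable f → ∀ C : ℝ, (∀ ω, |f ω| ≤ C) → Integrable f μ :=
    fun f hf C hC => sirAux.int_bdd hf C hC
  have hmulbd : ∀ (a b A B : ℝ), |a| ≤ A → |b| ≤ B → |a * b| ≤ A * B := fun a b A B ha hb => by
    rw [abs_mul]; exact mul_le_mul ha hb (abs_nonneg _) ((abs_nonneg _).trans ha)
  have hXrm : ∀ i, Measurable (fun ω => (X k i ω : ℝ)) :=
    fun i => measurable_from_top.comp (hXmeas k i)
  have hYrm : ∀ i, Measurable (fun ω => (Y k i ω : ℝ)) :=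
    fun i => measurable_from_top.comp (hYmeas k i)
  have hXrb : ∀ i ω, |(X k i ω : ℝ)| ≤ 1 := fun i ω => by
    rw [abs_of_nonneg (Nat.cast_nonneg _)]; exact_mod_cast hX1 k i ω
  have hYrb : ∀ i ω, |(Y k i ω : ℝ)| ≤ 1 := fun i ω => by
    rw [abs_of_nonneg (Nat.cast_nonneg _)]; exact_mod_cast hY1 k i ω
  have hSrb : ∀ j ω, |(S j ω : ℝ)| ≤ (N:ℝ) := fun j ω => by
    rw [abs_of_nonneg (Nat.cast_nonneg _)]; exact_mod_cast hSle j ω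
  have hIrb : ∀ j ω, |(I j ω : ℝ)| ≤ (N:ℝ) := fun j ω => by
    rw [abs_of_nonneg (Nat.cast_nonneg _)]; exact_mod_cast hIle j ω
  -- pull-out property for the basic variables
  have hpull : ∀ (g : Ω → ℝ), StronglyMeasurable[sirFiltration S I k] g →
      ∀ C : ℝ, (∀ ω, |g ω| ≤ C) →
      ∀ v w : Finset ℕ, v ⊆ Finset.range N → w ⊆ Finset.range N →
      μ[(fun ω => g ω * ((∏ i ∈ v, (X k i ω:ℝ)) * ∏ j ∈ w, (Y k j ω:ℝ)))|sirFiltration S I k]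
        =ᵐ[μ] fun ω => g ω * (pf ω ^ v.card * rr ^ w.card) := by
    intro g hg C hC v w hv hw
    have hZm : Measurable (fun ω => (∏ i ∈ v, (X k i ω:ℝ)) * ∏ j ∈ w, (Y k j ω:ℝ)) :=
      (Finset.measurable_prod v fun i _ => hXrm i).mul (Finset.measurable_prod w fun j _ => hYrm j)
    have hZb : ∀ ω, |(∏ i ∈ v, (X k i ω:ℝ)) * ∏ j ∈ w, (Y k j ω:ℝ)| ≤ 1 := by
      intro ω; rw [hprodX ω v hv, hprodY ω w hw]; split_ifs <;> norm_num
    have hgm : Measurable g := hg.measurable.mono hm le_rfl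
    have h1 : Integrable (fun ω => g ω * ((∏ i ∈ v, (X k i ω:ℝ)) * ∏ j ∈ w, (Y k j ω:ℝ))) μ :=
      hintb _ (hgm.mul hZm) (C * 1) fun ω => hmulbd _ _ _ _ (hC ω) (hZb ω)
    have h2 : Integrable (fun ω => (∏ i ∈ v, (X k i ω:ℝ)) * ∏ j ∈ w, (Y k j ω:ℝ)) μ :=
      hintb _ hZm 1 hZb
    have h3 := condExp_mul_of_stronglyMeasurable_left hg h1 h2
    exact h3.trans ((EventuallyEq.refl (ae μ) g).mul (hbasic v w hv hw))
  have hone : ∀ (g : Ω → ℝ), StronglyMeasurable[sirFiltration S I k] g →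
      ∀ C : ℝ, (∀ ω, |g ω| ≤ C) → ∀ i, i < N →
      μ[(fun ω => g ω * (X k i ω:ℝ))|sirFiltration S I k] =ᵐ[μ] fun ω => g ω * pf ω := by
    intro g hg C hC i hi
    have := hpull g hg C hC {i} ∅ (by simpa using hi) (Finset.empty_subset _)
    simpa using this
  have htwo : ∀ (g : Ω → ℝ), StronglyMeasurable[sirFiltration S I k] g →
      ∀ C : ℝ, (∀ ω, |g ω| ≤ C) → ∀ i j, i < N → j < N → i ≠ j →
      μ[(fun ω => g ω * ((X k i ω:ℝ) * (X k j ω:ℝ)))|sirFiltration S I k]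
        =ᵐ[μ] fun ω => g ω * (pf ω * pf ω) := by
    intro g hg C hC i j hi hj hij
    have hsub : ({i, j} : Finset ℕ) ⊆ Finset.range N := by
      intro x hx; rcases Finset.mem_insert.mp hx with rfl | hx
      · exact Finset.mem_range.mpr hi
      · rw [Finset.mem_singleton] at hx; subst hx; exact Finset.mem_range.mpr hj
    have := hpull g hg C hC {i, j} ∅ hsub (Finset.empty_subset _)
    simpa [Finset.prod_pair hij, Finset.card_pair hij, sq] using this
  have hYone : ∀ (g : Ω → ℝ), StronglyMeasurable[sirFiltration S I k] g →
      ∀ C : ℝ, (∀ ω, |g ω| ≤ C) → ∀ j, j < N →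
      μ[(fun ω => g ω * (Y k j ω:ℝ))|sirFiltration S I k] =ᵐ[μ] fun ω => g ω * rr := by
    intro g hg C hC j hj
    have := hpull g hg C hC ∅ {j} (Finset.empty_subset _) (by simpa using hj)
    simpa using this
  have hXY : ∀ (g : Ω → ℝ), StronglyMeasurable[sirFiltration S I k] g →
      ∀ C : ℝ, (∀ ω, |g ω| ≤ C) → ∀ i j, i < N → j < N →
      μ[(fun ω => g ω * ((X k i ω:ℝ) * (Y k j ω:ℝ)))|sirFiltration S I k]
        =ᵐ[μ] fun ω => g ω * (pf ω * rr) := by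
    intro g hg C hC i j hi hj
    have := hpull g hg C hC {i} {j} (by simpa using hi) (by simpa using hj)
    simpa using this
  have hXsq : ∀ i ω, (X k i ω:ℝ) * (X k i ω:ℝ) = (X k i ω:ℝ) := by
    intro i ω
    have : X k i ω = 0 ∨ X k i ω = 1 := by have := hX1 k i ω; omega
    rcases this with h0 | h0 <;> rw [h0] <;> norm_num
  -- the indicator weights
  set c : ℕ → Ω → ℝ := fun i ω => if i < S k ω then 1 else 0 with hcdef
  set d : ℕ → Ω → ℝ := fun j ω => if j < I k ω then 1 else 0 with hddef
  have hcm : ∀ i, StronglyMeasurable[sirFiltration S I k] (c i) := by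
    intro i
    have hmeas : Measurable[sirFiltration S I k] (fun ω => if i < S k ω then (1:ℝ) else 0) :=
      Measurable.comp (measurable_from_top (f := fun n : ℕ => if i < n then (1:ℝ) else 0)) hSk
    rw [hcdef]
    exact hmeas.stronglyMeasurable
  have hdm : ∀ j, StronglyMeasurable[sirFiltration S I k] (d j) := by
    intro j
    have hmeas : Measurable[sirFiltration S I k] (fun ω => if j < I k ω then (1:ℝ) else 0) :=
      Measurable.comp (measurable_from_top (f := fun n : ℕ => if j < n then (1:ℝ) else 0)) hIk
    rw [hddef]
    exact hmeas.stronglyMeasurable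
  have hcb : ∀ i ω, |c i ω| ≤ 1 := by
    intro i ω; simp only [hcdef]; split_ifs <;> norm_num
  have hdb : ∀ j ω, |d j ω| ≤ 1 := by
    intro j ω; simp only [hddef]; split_ifs <;> norm_num
  have hcsq : ∀ i ω, c i ω * c i ω = c i ω := by
    intro i ω; simp only [hcdef]; split_ifs <;> norm_num
  have hcsum : ∀ ω, ∑ i ∈ Finset.range N, c i ω = (S k ω : ℝ) := by
    intro ω
    have := sirAux.sum_ite_mul N (S k ω) (hSle k ω) (fun _ => (1:ℝ))
    simpa [hcdef] using this
  have hdsum : ∀ ω, ∑ j ∈ Finset.range N, d j ω = (I k ω : ℝ) := by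
    intro ω
    have := sirAux.sum_ite_mul N (I k ω) (hIle k ω) (fun _ => (1:ℝ))
    simpa [hddef] using this
  set gA : Ω → ℝ := fun ω => ∑ i ∈ Finset.range N, c i ω * (X k i ω:ℝ) with hgAdef
  set gB : Ω → ℝ := fun ω => ∑ j ∈ Finset.range N, d j ω * (Y k j ω:ℝ) with hgBdef
  have hgAm : Measurable gA := by
    rw [hgAdef]
    exact Finset.measurable_sum _ fun i _ => ((hcm i).measurable.mono hm le_rfl).mul (hXrm i)
  have hgBm : Measurable gB := by
    rw [hgBdef]
    exact Finset.measurable_sum _ fun j _ => ((hdm j).measurable.mono hm le_rfl).mul (hYrm j)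
  have hgAb : ∀ ω, |gA ω| ≤ (N:ℝ) := by
    intro ω
    rw [hgAdef]
    calc |∑ i ∈ Finset.range N, c i ω * (X k i ω:ℝ)|
        ≤ ∑ i ∈ Finset.range N, |c i ω * (X k i ω:ℝ)| := Finset.abs_sum_le_sum_abs _ _
      _ ≤ ∑ _i ∈ Finset.range N, (1:ℝ) := Finset.sum_le_sum fun i _ => by
          have := hmulbd _ _ _ _ (hcb i ω) (hXrb i ω); simpa using this
      _ = (N:ℝ) := by simp
  have hgBb : ∀ ω, |gB ω| ≤ (N:ℝ) := by
    intro ω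
    rw [hgBdef]
    calc |∑ j ∈ Finset.range N, d j ω * (Y k j ω:ℝ)|
        ≤ ∑ j ∈ Finset.range N, |d j ω * (Y k j ω:ℝ)| := Finset.abs_sum_le_sum_abs _ _
      _ ≤ ∑ _j ∈ Finset.range N, (1:ℝ) := Finset.sum_le_sum fun j _ => by
          have := hmulbd _ _ _ _ (hdb j ω) (hYrb j ω); simpa using this
      _ = (N:ℝ) := by simp
  have hS1 : ∀ ω, (S (k+1) ω : ℝ) = (S k ω : ℝ) - gA ω := by
    intro ω
    have h0 := hSrec k ω
    have h1 : gA ω = ∑ i ∈ Finset.range (S k ω), (X k i ω : ℝ) := by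
      rw [hgAdef]
      simp only [hcdef]
      exact sirAux.sum_ite_mul N (S k ω) (hSle k ω) _
    have h2 : (S (k+1) ω : ℝ) + ∑ i ∈ Finset.range (S k ω), (X k i ω:ℝ) = (S k ω:ℝ) := by
      exact_mod_cast h0
    rw [h1]; linarith
  have hI1 : ∀ ω, (I (k+1) ω : ℝ) = (I k ω : ℝ) + gA ω - gB ω := by
    intro ω
    have h0 := hIrec k ω
    have h1 : gA ω = ∑ i ∈ Finset.range (S k ω), (X k i ω : ℝ) := by
      rw [hgAdef]
      simp only [hcdef]
      exact sirAux.sum_ite_mul N (S k ω) (hSle k ω) _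
    have h1' : gB ω = ∑ j ∈ Finset.range (I k ω), (Y k j ω : ℝ) := by
      rw [hgBdef]
      simp only [hddef]
      exact sirAux.sum_ite_mul N (I k ω) (hIle k ω) _
    have h2 : (I (k+1) ω : ℝ) + ∑ j ∈ Finset.range (I k ω), (Y k j ω:ℝ)
        = (I k ω:ℝ) + ∑ i ∈ Finset.range (S k ω), (X k i ω:ℝ) := by
      exact_mod_cast h0
    rw [h1, h1']; linarith
  -- conditional expectation of finite sums
  have hsumExp : ∀ {ι : Type} (Q : Finset ι) (f fE : ι → Ω → ℝ),
      (∀ i ∈ Q, Integrable (f i) μ) → (∀ i ∈ Q, μ[f i|sirFiltration S I k] =ᵐ[μ] fE i) →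
      μ[(fun ω => ∑ i ∈ Q, f i ω)|sirFiltration S I k] =ᵐ[μ] fun ω => ∑ i ∈ Q, fE i ω := by
    intro ι Q f fE hInt hE
    have hrw : (fun ω => ∑ i ∈ Q, f i ω) = ∑ i ∈ Q, f i := by
      funext ω; rw [Finset.sum_apply]
    rw [hrw]
    refine (condExp_finsetSum hInt _).trans
      ((sirAux.ae_finset_sum Q hE).trans (ae_of_all μ fun ω => ?_))
    rw [Finset.sum_apply]
  -- E[gA | F] and E[gB | F]
  have eA : μ[gA|sirFiltration S I k] =ᵐ[μ] fun ω => (S k ω:ℝ) * pf ω := by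
    have e0 : μ[(fun ω => ∑ i ∈ Finset.range N, c i ω * (X k i ω:ℝ))|sirFiltration S I k]
        =ᵐ[μ] fun ω => ∑ i ∈ Finset.range N, c i ω * pf ω :=
      hsumExp (Finset.range N) (fun i ω => c i ω * (X k i ω:ℝ)) (fun i ω => c i ω * pf ω)
        (fun i _ => hintb _ (((hcm i).measurable.mono hm le_rfl).mul (hXrm i)) 1
          fun ω => by simpa using hmulbd _ _ _ _ (hcb i ω) (hXrb i ω))
        (fun i hi => hone (c i) (hcm i) 1 (hcb i) i (Finset.mem_range.mp hi))
    refine e0.trans (ae_of_all μ fun ω => ?_)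
    beta_reduce
    rw [← Finset.sum_mul, hcsum ω]
  have eB : μ[gB|sirFiltration S I k] =ᵐ[μ] fun ω => (I k ω:ℝ) * rr := by
    have e0 : μ[(fun ω => ∑ j ∈ Finset.range N, d j ω * (Y k j ω:ℝ))|sirFiltration S I k]
        =ᵐ[μ] fun ω => ∑ j ∈ Finset.range N, d j ω * rr :=
      hsumExp (Finset.range N) (fun j ω => d j ω * (Y k j ω:ℝ)) (fun j ω => d j ω * rr)
        (fun j _ => hintb _ (((hdm j).measurable.mono hm le_rfl).mul (hYrm j)) 1
          fun ω => by simpa using hmulbd _ _ _ _ (hdb j ω) (hYrb j ω))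
        (fun j hj => hYone (d j) (hdm j) 1 (hdb j) j (Finset.mem_range.mp hj))
    refine e0.trans (ae_of_all μ fun ω => ?_)
    beta_reduce
    rw [← Finset.sum_mul, hdsum ω]
  -- integrability facts
  have iSr : Integrable (fun ω => (S k ω:ℝ)) μ := hintb _ (measurable_from_top.comp (hSmeas k)) N (hSrb k)
  have iIr : Integrable (fun ω => (I k ω:ℝ)) μ := hintb _ (measurable_from_top.comp (hImeas k)) N (hIrb k)
  have igA : Integrable gA μ := hintb _ hgAm N hgAb
  have igB : Integrable gB μ := hintb _ hgBm N hgBb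
  have hSrmeas : Measurable (fun ω => (S k ω:ℝ)) := measurable_from_top.comp (hSmeas k)
  have hIrmeas : Measurable (fun ω => (I k ω:ℝ)) := measurable_from_top.comp (hImeas k)
  -- E[S_{k+1} | F]
  have ES : μ[(fun ω' => ((S (k+1) ω' : ℝ)))|sirFiltration S I k]
      =ᵐ[μ] fun ω => (S k ω:ℝ) - (S k ω:ℝ) * pf ω := by
    rw [show (fun ω' => ((S (k+1) ω' : ℝ))) = (fun ω => (S k ω:ℝ)) - gA from
      funext fun ω => by simp only [Pi.sub_apply]; exact hS1 ω]
    refine (condExp_sub iSr igA _).trans ?_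
    rw [condExp_of_stronglyMeasurable hm hSrm iSr]
    exact (EventuallyEq.refl _ _).sub eA
  -- E[I_{k+1} | F]
  have EI : μ[(fun ω' => ((I (k+1) ω' : ℝ)))|sirFiltration S I k]
      =ᵐ[μ] fun ω => ((I k ω:ℝ) + (S k ω:ℝ) * pf ω) - (I k ω:ℝ) * rr := by
    rw [show (fun ω' => ((I (k+1) ω' : ℝ))) = ((fun ω => (I k ω:ℝ)) + gA) - gB from
      funext fun ω => by simp only [Pi.sub_apply, Pi.add_apply]; exact hI1 ω]
    refine (condExp_sub (iIr.add igA) igB _).trans ?_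
    refine EventuallyEq.sub ((condExp_add iIr igA _).trans ?_) eB
    rw [condExp_of_stronglyMeasurable hm hIrm iIr]
    exact (EventuallyEq.refl _ _).add eA
  -- E[Sr * gA | F] etc.
  have eSrA : μ[(fun ω => (S k ω:ℝ) * gA ω)|sirFiltration S I k]
      =ᵐ[μ] fun ω => (S k ω:ℝ) * ((S k ω:ℝ) * pf ω) := by
    have h3 := condExp_mul_of_stronglyMeasurable_left hSrm
      (hintb (fun ω => (S k ω:ℝ) * gA ω) (hSrmeas.mul hgAm) (N*N)
        fun ω => hmulbd _ _ _ _ (hSrb k ω) (hgAb ω)) igA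
    exact h3.trans ((EventuallyEq.refl (ae μ) _).mul eA)
  have eSrB : μ[(fun ω => (S k ω:ℝ) * gB ω)|sirFiltration S I k]
      =ᵐ[μ] fun ω => (S k ω:ℝ) * ((I k ω:ℝ) * rr) := by
    have h3 := condExp_mul_of_stronglyMeasurable_left hSrm
      (hintb (fun ω => (S k ω:ℝ) * gB ω) (hSrmeas.mul hgBm) (N*N)
        fun ω => hmulbd _ _ _ _ (hSrb k ω) (hgBb ω)) igB
    exact h3.trans ((EventuallyEq.refl (ae μ) _).mul eB)
  have eIrA : μ[(fun ω => (I k ω:ℝ) * gA ω)|sirFiltration S I k]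
      =ᵐ[μ] fun ω => (I k ω:ℝ) * ((S k ω:ℝ) * pf ω) := by
    have h3 := condExp_mul_of_stronglyMeasurable_left hIrm
      (hintb (fun ω => (I k ω:ℝ) * gA ω) (hIrmeas.mul hgAm) (N*N)
        fun ω => hmulbd _ _ _ _ (hIrb k ω) (hgAb ω)) igA
    exact h3.trans ((EventuallyEq.refl (ae μ) _).mul eA)
  -- E[gA * gA | F]
  have eAA : μ[(fun ω => gA ω * gA ω)|sirFiltration S I k]
      =ᵐ[μ] fun ω => (S k ω:ℝ) * pf ω + ((S k ω:ℝ)^2 - (S k ω:ℝ)) * pf ω^2 := by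
    have hfun : (fun ω => gA ω * gA ω) = fun ω =>
        ∑ pr ∈ Finset.range N ×ˢ Finset.range N,
          (c pr.1 ω * c pr.2 ω) * ((X k pr.1 ω:ℝ) * (X k pr.2 ω:ℝ)) := by
      funext ω
      rw [hgAdef]
      simp only []
      rw [Finset.sum_mul_sum, ← Finset.sum_product']
      exact Finset.sum_congr rfl fun pr _ => by ring
    rw [hfun]
    have e0 := hsumExp (Finset.range N ×ˢ Finset.range N)
      (fun pr ω => (c pr.1 ω * c pr.2 ω) * ((X k pr.1 ω:ℝ) * (X k pr.2 ω:ℝ)))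
      (fun pr ω => (c pr.1 ω * c pr.2 ω) * (if pr.1 = pr.2 then pf ω else pf ω * pf ω))
      (fun pr _ => hintb _
        (((((hcm pr.1).measurable.mono hm le_rfl)).mul ((hcm pr.2).measurable.mono hm le_rfl)).mul
          ((hXrm pr.1).mul (hXrm pr.2))) 1
        fun ω => by
          have := hmulbd _ _ _ _ (hmulbd _ _ _ _ (hcb pr.1 ω) (hcb pr.2 ω))
            (hmulbd _ _ _ _ (hXrb pr.1 ω) (hXrb pr.2 ω))
          simpa using this)
      (fun pr hpr => by
        beta_reduce
        rw [Finset.mem_product] at hpr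
        have h1 := Finset.mem_range.mp hpr.1
        have h2 := Finset.mem_range.mp hpr.2
        by_cases hij : pr.1 = pr.2
        · have hfeq : (fun ω => (c pr.1 ω * c pr.2 ω) * ((X k pr.1 ω:ℝ) * (X k pr.2 ω:ℝ)))
              = fun ω => (c pr.1 ω * c pr.2 ω) * (X k pr.1 ω:ℝ) := by
            funext ω
            beta_reduce
            rw [← hij, hXsq pr.1 ω]
          rw [hfeq]
          refine (hone _ ((hcm pr.1).mul (hcm pr.2)) 1
            (fun ω => by simpa using hmulbd _ _ _ _ (hcb pr.1 ω) (hcb pr.2 ω)) pr.1 h1).trans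
            (ae_of_all μ fun ω => by beta_reduce; rw [if_pos hij]; rfl)
        · refine (htwo _ ((hcm pr.1).mul (hcm pr.2)) 1
            (fun ω => by simpa using hmulbd _ _ _ _ (hcb pr.1 ω) (hcb pr.2 ω))
            pr.1 pr.2 h1 h2 hij).trans
            (ae_of_all μ fun ω => by beta_reduce; rw [if_neg hij]; rfl))
    refine e0.trans (ae_of_all μ fun ω => ?_)
    beta_reduce
    have h1 : ∑ pr ∈ Finset.range N ×ˢ Finset.range N,
        (c pr.1 ω * c pr.2 ω) * (if pr.1 = pr.2 then pf ω else pf ω * pf ω)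
        = ∑ pr ∈ Finset.range N ×ˢ Finset.range N,
          ((c pr.1 ω * c pr.2 ω) * (pf ω * pf ω)
            + (if pr.1 = pr.2 then (c pr.1 ω * c pr.2 ω) * (pf ω - pf ω * pf ω) else 0)) :=
      Finset.sum_congr rfl fun pr _ => by split_ifs with hd <;> ring
    rw [h1, Finset.sum_add_distrib]
    have h2 : ∑ pr ∈ Finset.range N ×ˢ Finset.range N, (c pr.1 ω * c pr.2 ω) * (pf ω * pf ω)
        = ((S k ω:ℝ) * (S k ω:ℝ)) * (pf ω * pf ω) := by
      rw [Finset.sum_product]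
      have hin : ∀ i, ∑ j ∈ Finset.range N, (c i ω * c j ω) * (pf ω * pf ω)
          = c i ω * ((S k ω:ℝ) * (pf ω * pf ω)) := by
        intro i
        rw [show (fun j => (c i ω * c j ω) * (pf ω * pf ω))
            = fun j => c j ω * (c i ω * (pf ω * pf ω)) from funext fun j => by ring]
        rw [← Finset.sum_mul, hcsum ω]
        ring
      rw [Finset.sum_congr rfl fun i _ => hin i, ← Finset.sum_mul, hcsum ω]
      ring
    have h3 : ∑ pr ∈ Finset.range N ×ˢ Finset.range N,
        (if pr.1 = pr.2 then (c pr.1 ω * c pr.2 ω) * (pf ω - pf ω * pf ω) else 0)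
        = (S k ω:ℝ) * (pf ω - pf ω * pf ω) := by
      rw [Finset.sum_product]
      have hin : ∀ i ∈ Finset.range N,
          ∑ j ∈ Finset.range N, (if i = j then (c i ω * c j ω) * (pf ω - pf ω * pf ω) else 0)
          = c i ω * (pf ω - pf ω * pf ω) := by
        intro i hi
        rw [Finset.sum_ite_eq (Finset.range N) i
          (fun j => (c i ω * c j ω) * (pf ω - pf ω * pf ω)), if_pos hi, hcsq i ω]
      rw [Finset.sum_congr rfl hin, ← Finset.sum_mul, hcsum ω]
    rw [h2, h3]
    ring
  -- E[gA * gB | F]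
  have eAB : μ[(fun ω => gA ω * gB ω)|sirFiltration S I k]
      =ᵐ[μ] fun ω => ((S k ω:ℝ) * pf ω) * ((I k ω:ℝ) * rr) := by
    have hfun : (fun ω => gA ω * gB ω) = fun ω =>
        ∑ pr ∈ Finset.range N ×ˢ Finset.range N,
          (c pr.1 ω * d pr.2 ω) * ((X k pr.1 ω:ℝ) * (Y k pr.2 ω:ℝ)) := by
      funext ω
      rw [hgAdef, hgBdef]
      simp only []
      rw [Finset.sum_mul_sum, ← Finset.sum_product']
      exact Finset.sum_congr rfl fun pr _ => by ring
    rw [hfun]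
    have e0 := hsumExp (Finset.range N ×ˢ Finset.range N)
      (fun pr ω => (c pr.1 ω * d pr.2 ω) * ((X k pr.1 ω:ℝ) * (Y k pr.2 ω:ℝ)))
      (fun pr ω => (c pr.1 ω * d pr.2 ω) * (pf ω * rr))
      (fun pr _ => hintb _
        (((((hcm pr.1).measurable.mono hm le_rfl)).mul ((hdm pr.2).measurable.mono hm le_rfl)).mul
          ((hXrm pr.1).mul (hYrm pr.2))) 1
        fun ω => by
          have := hmulbd _ _ _ _ (hmulbd _ _ _ _ (hcb pr.1 ω) (hdb pr.2 ω))
            (hmulbd _ _ _ _ (hXrb pr.1 ω) (hYrb pr.2 ω))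
          simpa using this)
      (fun pr hpr => by
        beta_reduce
        rw [Finset.mem_product] at hpr
        exact hXY _ ((hcm pr.1).mul (hdm pr.2)) 1
          (fun ω => by simpa using hmulbd _ _ _ _ (hcb pr.1 ω) (hdb pr.2 ω))
          pr.1 pr.2 (Finset.mem_range.mp hpr.1) (Finset.mem_range.mp hpr.2))
    refine e0.trans (ae_of_all μ fun ω => ?_)
    beta_reduce
    rw [Finset.sum_product]
    have hin : ∀ i, ∑ j ∈ Finset.range N, (c i ω * d j ω) * (pf ω * rr)
        = c i ω * ((I k ω:ℝ) * (pf ω * rr)) := by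
      intro i
      rw [show (fun j => (c i ω * d j ω) * (pf ω * rr))
          = fun j => d j ω * (c i ω * (pf ω * rr)) from funext fun j => by ring]
      rw [← Finset.sum_mul, hdsum ω]
      ring
    rw [Finset.sum_congr rfl fun i _ => hin i, ← Finset.sum_mul, hcsum ω]
    ring
  -- E[S_{k+1} I_{k+1} | F]
  have ESI : μ[(fun ω' => ((S (k+1) ω' : ℝ)) * ((I (k+1) ω' : ℝ)))|sirFiltration S I k]
      =ᵐ[μ] fun ω =>
        (((S k ω:ℝ) * (I k ω:ℝ) + (S k ω:ℝ) * ((S k ω:ℝ) * pf ω))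
          - ((S k ω:ℝ) * ((I k ω:ℝ) * rr) + (I k ω:ℝ) * ((S k ω:ℝ) * pf ω)))
        - (((S k ω:ℝ) * pf ω + ((S k ω:ℝ)^2 - (S k ω:ℝ)) * pf ω^2)
          - ((S k ω:ℝ) * pf ω) * ((I k ω:ℝ) * rr)) := by
    have hSIfun : (fun ω' => ((S (k+1) ω' : ℝ)) * ((I (k+1) ω' : ℝ)))
        = (((fun ω => (S k ω:ℝ) * (I k ω:ℝ)) + (fun ω => (S k ω:ℝ) * gA ω))
            - ((fun ω => (S k ω:ℝ) * gB ω) + (fun ω => (I k ω:ℝ) * gA ω)))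
          - ((fun ω => gA ω * gA ω) - (fun ω => gA ω * gB ω)) := by
      funext ω
      simp only [Pi.sub_apply, Pi.add_apply]
      rw [hS1 ω, hI1 ω]
      ring
    rw [hSIfun]
    have i1 : Integrable (fun ω => (S k ω:ℝ) * (I k ω:ℝ)) μ :=
      hintb _ (hSrmeas.mul hIrmeas) (N*N) fun ω => hmulbd _ _ _ _ (hSrb k ω) (hIrb k ω)
    have i2 : Integrable (fun ω => (S k ω:ℝ) * gA ω) μ :=
      hintb _ (hSrmeas.mul hgAm) (N*N) fun ω => hmulbd _ _ _ _ (hSrb k ω) (hgAb ω)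
    have i3 : Integrable (fun ω => (S k ω:ℝ) * gB ω) μ :=
      hintb _ (hSrmeas.mul hgBm) (N*N) fun ω => hmulbd _ _ _ _ (hSrb k ω) (hgBb ω)
    have i4 : Integrable (fun ω => (I k ω:ℝ) * gA ω) μ :=
      hintb _ (hIrmeas.mul hgAm) (N*N) fun ω => hmulbd _ _ _ _ (hIrb k ω) (hgAb ω)
    have i5 : Integrable (fun ω => gA ω * gA ω) μ :=
      hintb _ (hgAm.mul hgAm) (N*N) fun ω => hmulbd _ _ _ _ (hgAb ω) (hgAb ω)
    have i6 : Integrable (fun ω => gA ω * gB ω) μ :=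
      hintb _ (hgAm.mul hgBm) (N*N) fun ω => hmulbd _ _ _ _ (hgAb ω) (hgBb ω)
    have eT1 : μ[(fun ω => (S k ω:ℝ) * (I k ω:ℝ))|sirFiltration S I k]
        =ᵐ[μ] fun ω => (S k ω:ℝ) * (I k ω:ℝ) := by
      have hsm : StronglyMeasurable[sirFiltration S I k] (fun ω => (S k ω:ℝ) * (I k ω:ℝ)) :=
        hSrm.mul hIrm
      rw [condExp_of_stronglyMeasurable hm hsm i1]
    refine (condExp_sub ((i1.add i2).sub (i3.add i4)) (i5.sub i6) _).trans ?_
    refine EventuallyEq.sub ((condExp_sub (i1.add i2) (i3.add i4) _).trans ?_)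
      ((condExp_sub i5 i6 _).trans (EventuallyEq.sub eAA eAB))
    exact EventuallyEq.sub ((condExp_add i1 i2 _).trans (eT1.add eSrA))
      ((condExp_add i3 i4 _).trans (eSrB.add eIrA))
  -- final assembly
  have hcov : (fun ω =>
        (μ[fun ω' => ((S (k + 1) ω' : ℝ)) * ((I (k + 1) ω' : ℝ))|sirFiltration S I k]) ω
          - (μ[fun ω' => ((S (k + 1) ω' : ℝ))|sirFiltration S I k]) ω
            * (μ[fun ω' => ((I (k + 1) ω' : ℝ))|sirFiltration S I k]) ω)
      =ᵐ[μ] fun ω =>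
        -((S k ω : ℝ) * (1 - Real.exp (-(lam * (I k ω : ℝ) * h)))
            * Real.exp (-(lam * (I k ω : ℝ) * h))) := by
    filter_upwards [ESI, ES, EI] with ω h1 h2 h3
    rw [h1, h2, h3]
    simp only [hpf, hqf, hrr, huu]
    ring
  refine ⟨hcov, ?_⟩
  filter_upwards [hcov] with ω hw
  rw [hw]
  have hx0 : 0 ≤ lam * ((I k ω):ℝ) * h :=
    mul_nonneg (mul_nonneg hlam (Nat.cast_nonneg _)) hh.le
  have he1 : Real.exp (-(lam * ((I k ω):ℝ) * h)) ≤ 1 :=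
    Real.exp_le_one_iff.mpr (by linarith)
  have he0 : (0:ℝ) < Real.exp (-(lam * ((I k ω):ℝ) * h)) := Real.exp_pos _
  have hple : 1 - Real.exp (-(lam * ((I k ω):ℝ) * h)) ≤ lam * ((I k ω):ℝ) * h := by
    have := Real.add_one_le_exp (-(lam * ((I k ω):ℝ) * h)); linarith
  have hSc : ((S k ω):ℝ) ≤ (N:ℝ) := by exact_mod_cast hSle k ω
  have hIc : ((I k ω):ℝ) ≤ (N:ℝ) := by exact_mod_cast hIle k ω
  have hS0 : (0:ℝ) ≤ ((S k ω):ℝ) := Nat.cast_nonneg _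
  rw [abs_neg, abs_of_nonneg (mul_nonneg (mul_nonneg hS0 (by linarith)) he0.le)]
  have hlamIh : lam * ((I k ω):ℝ) * h ≤ lam * (N:ℝ) * h := by
    apply mul_le_mul_of_nonneg_right _ hh.le
    exact mul_le_mul_of_nonneg_left hIc hlam
  calc ((S k ω):ℝ) * (1 - Real.exp (-(lam * ((I k ω):ℝ) * h)))
        * Real.exp (-(lam * ((I k ω):ℝ) * h))
      ≤ ((S k ω):ℝ) * (1 - Real.exp (-(lam * ((I k ω):ℝ) * h))) * 1 := by
        apply mul_le_mul_of_nonneg_left he1 (mul_nonneg hS0 (by linarith))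
    _ = ((S k ω):ℝ) * (1 - Real.exp (-(lam * ((I k ω):ℝ) * h))) := mul_one _
    _ ≤ (N:ℝ) * (lam * (N:ℝ) * h) :=
        mul_le_mul hSc (hple.trans hlamIh) (by linarith) (Nat.cast_nonneg N)
    _ = lam * (N:ℝ)^2 * h := by ring
end
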